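/- arXiv:1812.02099 — 2 statements merged into one kernel-verified Lean document; each statement's English description precedes it below -/
import Mathlib

section
/- Let C be a concept class that is isometric, and let c_1,…,c_m be an ordering of all concepts of C with level sets C_i = {c_1,…,c_i}. Then the following are equivalent: (1) every level set C_i is ample; (2) every c_i is a corner of C_i; (3) every level set C_i is isometric; (4) every level set C_i is weakly isometric. -/
variable {X : Type} [Fintype X] [DecidableEq X]

/-- Hamming distance between two subsets of `X` (size of symmetric difference). -/
def hdist (c c' : Finset X) : ℕ := ((c \ c') ∪ (c' \ c)).card

/-- The restriction `C|Y = {c ∩ Y : c ∈ C}`. -/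
def restrictTo (C : Finset (Finset X)) (Y : Finset X) : Finset (Finset X) :=
  C.image (· ∩ Y)

/-- `Y` is shattered by `C`, i.e. `C|Y = 2^Y`. -/
def Shatters (C : Finset (Finset X)) (Y : Finset X) : Prop :=
  ∀ s ∈ Y.powerset, ∃ c ∈ C, c ∩ Y = s

instance (C : Finset (Finset X)) : DecidablePred (Shatters C) := fun _ => by
  unfold Shatters; infer_instance

/-- The family `X̄(C)` of all sets shattered by `C`. -/
def shatteredSets (C : Finset (Finset X)) : Finset (Finset X) :=
  Finset.univ.filter (Shatters C)

/-- The VC dimension of `C`: maximum size of a shattered set. -/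
def vcDim (C : Finset (Finset X)) : ℕ := (shatteredSets C).sup Finset.card

/-- `C` is ample: `|C| = |X̄(C)|`. -/
def IsAmple (C : Finset (Finset X)) : Prop := C.card = (shatteredSets C).card

/-- `C` is a maximum class of VC dimension `d`. -/
def IsMaximumClass (C : Finset (Finset X)) (d : ℕ) : Prop :=
  vcDim C = d ∧ C.card = ∑ i ∈ Finset.range (d + 1), (Fintype.card X).choose i

/-- `B` is a cube with support `Y`: `B = {t ∪ s : s ⊆ Y}` for some `t ⊆ X \ Y`. -/
def IsCubeS (B : Finset (Finset X)) (Y : Finset X) : Prop :=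
  ∃ t : Finset X, t ∩ Y = ∅ ∧ B = Y.powerset.image (fun s => t ∪ s)

/-- `B` is a cube. -/
def IsCube (B : Finset (Finset X)) : Prop := ∃ Y, IsCubeS B Y

/-- `B` is a cube of `C`: a cube contained in `C`. -/
def IsCubeOf (C B : Finset (Finset X)) : Prop := B ⊆ C ∧ IsCube B

/-- `B` is a maximal cube of `C` (maximal under inclusion among cubes of `C`). -/
def IsMaximalCubeOf (C B : Finset (Finset X)) : Prop :=
  IsCubeOf C B ∧ ∀ B', IsCubeOf C B' → B ⊆ B' → B = B'

/-- `c` is a corner of `C`: a concept of `C` belonging to a unique maximal cube of `C`. -/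
def IsCornerOf (C : Finset (Finset X)) (c : Finset X) : Prop :=
  c ∈ C ∧ ∃! B, IsMaximalCubeOf C B ∧ c ∈ B

/-- The one-inclusion graph `G(C)`. -/
def oneInclusionGraph (C : Finset (Finset X)) : SimpleGraph {c : Finset X // c ∈ C} where
  Adj c c' := hdist c.1 c'.1 = 1
  symm := by
    constructor
    intro a b h
    simpa [hdist, Finset.union_comm] using h
  loopless := by
    constructor
    intro a h
    simp [hdist] at h

/-- `C` is isometric: `G(C)` is connected and graph distances equal Hamming distances. -/
def IsIsometric (C : Finset (Finset X)) : Prop :=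
  (oneInclusionGraph C).Connected ∧
  ∀ c c' : {c : Finset X // c ∈ C}, (oneInclusionGraph C).dist c c' = hdist c.1 c'.1

/-- `C` is weakly isometric: `G(C)` is connected and graph distances equal Hamming
distances for pairs at Hamming distance at most 2. -/
def IsWeaklyIsometric (C : Finset (Finset X)) : Prop :=
  (oneInclusionGraph C).Connected ∧
  ∀ c c' : {c : Finset X // c ∈ C}, hdist c.1 c'.1 ≤ 2 →
    (oneInclusionGraph C).dist c c' = hdist c.1 c'.1

/-- A list of concepts is a corner peeling if it has no duplicates and each element is a
corner of the corresponding level set. -/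
def IsCornerPeeling (l : List (Finset X)) : Prop :=
  l.Nodup ∧ ∀ i (h : i < l.length), IsCornerOf ((l.take (i + 1)).toFinset) (l.get ⟨i, h⟩)

/-- `C` is dismantlable: it admits a corner peeling ordering of all its concepts. -/
def Dismantlable (C : Finset (Finset X)) : Prop :=
  ∃ l : List (Finset X), l.toFinset = C ∧ IsCornerPeeling l

/-- Non-clashing condition for a map `r`. -/
def NonClashing (C : Finset (Finset X)) (r : Finset X → Finset X) : Prop :=
  ∀ c ∈ C, ∀ c' ∈ C, c ≠ c' → c ∩ (r c ∪ r c') ≠ c' ∩ (r c ∪ r c')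

/-- `r` is a representation map for `C`: a non-clashing bijection from `C` onto `X̄(C)`. -/
def IsRepMap (C : Finset (Finset X)) (r : Finset X → Finset X) : Prop :=
  (∀ c ∈ C, r c ∈ shatteredSets C) ∧
  Set.InjOn r ↑C ∧
  (∀ Y ∈ shatteredSets C, ∃ c ∈ C, r c = Y) ∧
  NonClashing C r

/-- `C` admits an unlabeled sample compression scheme of size `k`. -/
def HasUSCS (C : Finset (Finset X)) (k : ℕ) : Prop :=
  ∃ (α : Finset X → Finset X → Finset X) (β : Finset X → Finset X),
    ∀ (Y : Finset X), ∀ c ∈ C,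
      α Y (c ∩ Y) ⊆ Y ∧ (α Y (c ∩ Y)).card ≤ k ∧
      β (α Y (c ∩ Y)) ∈ C ∧ β (α Y (c ∩ Y)) ∩ Y = c ∩ Y

/-- The cube of `2^X` with support `Y` containing `c`. -/
def cubeAt (c Y : Finset X) : Finset (Finset X) :=
  Y.powerset.image (fun s => (c \ Y) ∪ s)

/-- Condition (C1): for every `c ∈ C`, the cube with support `r c` containing `c`
is a cube of `C`. -/
def CondC1 (C : Finset (Finset X)) (r : Finset X → Finset X) : Prop :=
  ∀ c ∈ C, cubeAt c (r c) ⊆ C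

/-- Condition (C2): every cube of `C` has a unique concept `c` with `r c ∩ supp B = ∅`. -/
def CondC2 (C : Finset (Finset X)) (r : Finset X → Finset X) : Prop :=
  ∀ B Y, B ⊆ C → IsCubeS B Y → ∃! c, c ∈ B ∧ r c ∩ Y = ∅

/-- The facet of the cross-polytope corresponding to a subset `c ⊆ X`:
`+x ∈ σ_c` iff `x ∈ c` (where `+x = Sum.inl x` and `-x = Sum.inr x`). -/
def facet (c : Finset X) : Finset (X ⊕ X) :=
  c.image Sum.inl ∪ (Finset.univ \ c).image Sum.inr

/-- A list of facets of the cross-polytope is a partial shelling. -/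
def IsPartialShelling (L : List (Finset (X ⊕ X))) : Prop :=
  L.Nodup ∧ ∀ i j, i < j → j < L.length →
    ∃ k < j, ((L.getD k ∅) ∩ (L.getD j ∅)).card = Fintype.card X - 1 ∧
      (L.getD i ∅) ∩ (L.getD j ∅) ⊆ (L.getD k ∅) ∩ (L.getD j ∅)

/-- `Q` is an incomplete cube for `(C, D)` with support `σ`: a cube of `C` whose
support `σ` is a missed simplex (shattered by `C` but not by `D`). -/
def IsIncompleteCube (C D Q : Finset (Finset X)) (σ : Finset X) : Prop :=
  Q ⊆ C ∧ IsCubeS Q σ ∧ Shatters C σ ∧ ¬ Shatters D σ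

/-- `c` is the source of the incomplete cube `Q` with support `σ`:
`c ∈ Q` and `c ∩ σ ∉ D|σ`. -/
def IsSource (D Q : Finset (Finset X)) (σ : Finset X) (c : Finset X) : Prop :=
  c ∈ Q ∧ c ∩ σ ∉ restrictTo D σ

/-- The restriction `C_x = C|(X \ {x})`, with concepts viewed as subsets of `X`
avoiding `x`. -/
def restrictX (C : Finset (Finset X)) (x : X) : Finset (Finset X) :=
  C.image (·.erase x)

/-- The reduction `C^x = {c ⊆ X \ {x} : c ∈ C and c ∪ {x} ∈ C}`. -/
def reduction (C : Finset (Finset X)) (x : X) : Finset (Finset X) :=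
  C.filter (fun c => x ∉ c ∧ insert x c ∈ C)

/-- The interval `B(c,c') = {t : d(c,t) + d(t,c') = d(c,c')}`. -/
def interval (c c' : Finset X) : Finset (Finset X) :=
  Finset.univ.filter (fun t => hdist c t + hdist t c' = hdist c c')

/-- `C'` is convex in `C`. -/
def IsConvexIn (C C' : Finset (Finset X)) : Prop :=
  ∀ c ∈ C', ∀ c'' ∈ C', interval c c'' ∩ C ⊆ C'

/-- `C'` is locally convex in `C`. -/
def IsLocallyConvexIn (C C' : Finset (Finset X)) : Prop :=
  ∀ c ∈ C', ∀ c'' ∈ C', hdist c c'' = 2 → interval c c'' ∩ C ⊆ C'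

/-- `C` is a conditional antimatroid: contains `∅`, closed under intersection, and
every concept is generated by its extremal points. -/
def IsCondAntimatroid (C : Finset (Finset X)) : Prop :=
  ∅ ∈ C ∧ (∀ c ∈ C, ∀ c' ∈ C, c ∩ c' ∈ C) ∧
  ∀ c ∈ C, ∀ c' ∈ C, (c.filter (fun x => c.erase x ∈ C)) ⊆ c' → c ⊆ c'

section Part1
set_option linter.unusedSectionVars false
open scoped symmDiff
variable {X : Type} [Fintype X] [DecidableEq X]

lemma hdist_eq_symmDiff (c c' : Finset X) : hdist c c' = (c ∆ c').card := by
  rfl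

lemma hdist_comm' (c c' : Finset X) : hdist c c' = hdist c' c := by
  rw [hdist_eq_symmDiff, hdist_eq_symmDiff, symmDiff_comm]

lemma hdist_self' (c : Finset X) : hdist c c = 0 := by
  simp [hdist_eq_symmDiff]

lemma hdist_eq_zero_iff {c c' : Finset X} : hdist c c' = 0 ↔ c = c' := by
  rw [hdist_eq_symmDiff, Finset.card_eq_zero, ← Finset.bot_eq_empty, symmDiff_eq_bot]

lemma hdist_triangle (a b c : Finset X) : hdist a c ≤ hdist a b + hdist b c := by
  rw [hdist_eq_symmDiff, hdist_eq_symmDiff, hdist_eq_symmDiff]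
  calc (a ∆ c).card ≤ (a ∆ b ∪ b ∆ c).card :=
        Finset.card_le_card (symmDiff_triangle a b c)
    _ ≤ _ := Finset.card_union_le _ _

lemma symmDiff_cancel_left (a b : Finset X) : a ∆ (a ∆ b) = b := by
  rw [← symmDiff_assoc, symmDiff_self, bot_symmDiff]

lemma hdist_one_iff {a b : Finset X} : hdist a b = 1 ↔ ∃ z, a ∆ b = {z} := by
  rw [hdist_eq_symmDiff, Finset.card_eq_one]

end Part1
section Part2
open scoped symmDiff
variable {X : Type} [Fintype X] [DecidableEq X]

lemma symmDiff_singleton_mem {s : Finset X} {z : X} (h : z ∈ s) : s ∆ ({z} : Finset X) = s.erase z := by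
  ext w; simp only [Finset.mem_symmDiff, Finset.mem_singleton, Finset.mem_erase]
  by_cases hw : w = z <;> simp [hw, h] <;> tauto

lemma symmDiff_singleton_not_mem {s : Finset X} {z : X} (h : z ∉ s) : s ∆ ({z} : Finset X) = insert z s := by
  ext w; simp only [Finset.mem_symmDiff, Finset.mem_singleton, Finset.mem_insert]
  by_cases hw : w = z <;> simp [hw, h] <;> tauto

lemma card_symmDiff_singleton_mem {s : Finset X} {z : X} (h : z ∈ s) :
    (s ∆ ({z} : Finset X)).card = s.card - 1 := by
  rw [symmDiff_singleton_mem h, Finset.card_erase_of_mem h]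

lemma card_symmDiff_singleton_not_mem {s : Finset X} {z : X} (h : z ∉ s) :
    (s ∆ ({z} : Finset X)).card = s.card + 1 := by
  rw [symmDiff_singleton_not_mem h, Finset.card_insert_of_notMem h]

/-- Flipping one coordinate: distance to a fixed target. -/
lemma hdist_flip_of_mem {c d : Finset X} {z : X} (h : z ∈ c ∆ d) :
    hdist (c ∆ {z}) d = hdist c d - 1 := by
  rw [hdist_eq_symmDiff, hdist_eq_symmDiff, symmDiff_comm (c ∆ {z}) d, ← symmDiff_assoc]
  rw [symmDiff_comm d c, card_symmDiff_singleton_mem h]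

lemma hdist_flip_of_not_mem {c d : Finset X} {z : X} (h : z ∉ c ∆ d) :
    hdist (c ∆ {z}) d = hdist c d + 1 := by
  rw [hdist_eq_symmDiff, hdist_eq_symmDiff, symmDiff_comm (c ∆ {z}) d, ← symmDiff_assoc]
  rw [symmDiff_comm d c, card_symmDiff_singleton_not_mem h]

lemma hdist_symmDiff_singleton (c : Finset X) (z : X) : hdist c (c ∆ {z}) = 1 := by
  rw [hdist_eq_symmDiff, symmDiff_cancel_left]; simp

/-- Intersection distributes over symmetric difference. -/
lemma symmDiff_inter_distrib (a b Y : Finset X) : (a ∆ b) ∩ Y = (a ∩ Y) ∆ (b ∩ Y) := by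
  ext w; simp only [Finset.mem_symmDiff, Finset.mem_inter]; tauto

lemma inter_eq_of_not_mem_symmDiff {a b : Finset X} {Y : Finset X}
    (h : ∀ w ∈ a ∆ b, w ∉ Y) : a ∩ Y = b ∩ Y := by
  ext w; simp only [Finset.mem_inter]
  constructor
  · rintro ⟨hw, hwY⟩
    refine ⟨?_, hwY⟩
    by_contra hb
    exact h w (by simp [Finset.mem_symmDiff, hw, hb]) hwY
  · rintro ⟨hw, hwY⟩
    refine ⟨?_, hwY⟩
    by_contra hb
    exact h w (by simp [Finset.mem_symmDiff, hw, hb]) hwY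

end Part2
set_option linter.unusedSectionVars false
set_option linter.unreachableTactic false
set_option linter.unusedTactic false
section PartPath
open scoped symmDiff
variable {X : Type} [Fintype X] [DecidableEq X]

/-- A path of length `k` between concepts inside `C`. -/
inductive HasPath (C : Finset (Finset X)) : Finset X → Finset X → ℕ → Prop
  | refl (u : Finset X) (hu : u ∈ C) : HasPath C u u 0
  | cons {w v : Finset X} {k : ℕ} (u : Finset X) (hu : u ∈ C) (h1 : hdist u w = 1)
      (hp : HasPath C w v k) : HasPath C u v (k + 1)

namespace HasPath

lemma left_mem {C : Finset (Finset X)} {u v : Finset X} {k : ℕ} (h : HasPath C u v k) : u ∈ C := by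
  cases h <;> assumption

lemma right_mem {C : Finset (Finset X)} {u v : Finset X} {k : ℕ} (h : HasPath C u v k) : v ∈ C := by
  induction h <;> assumption

lemma mono {C C' : Finset (Finset X)} {u v : Finset X} {k : ℕ} (hsub : C ⊆ C')
    (h : HasPath C u v k) : HasPath C' u v k := by
  induction h with
  | refl u hu => exact refl u (hsub hu)
  | cons u hu h1 hp ih => exact cons u (hsub hu) h1 ih

lemma hdist_le {C : Finset (Finset X)} {u v : Finset X} {k : ℕ} (h : HasPath C u v k) :
    hdist u v ≤ k := by
  induction h with
  | refl u hu => simp [hdist_self']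
  | @cons w v k u hu h1 hp ih =>
    have := hdist_triangle u w v
    omega

lemma snoc {C : Finset (Finset X)} {u v w : Finset X} {k : ℕ} (h : HasPath C u v k)
    (hw : w ∈ C) (h1 : hdist v w = 1) : HasPath C u w (k + 1) := by
  induction h with
  | refl u hu => exact cons u hu h1 (refl w hw)
  | cons u hu h1' hp ih => exact cons u hu h1' (ih h1)

lemma symm {C : Finset (Finset X)} {u v : Finset X} {k : ℕ} (h : HasPath C u v k) :
    HasPath C v u k := by
  induction h with
  | refl u hu => exact refl u hu
  | cons u hu h1 hp ih => exact ih.snoc hu (by rw [hdist_comm']; exact h1)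

end HasPath

lemma walk_hasPath {C : Finset (Finset X)} {u v : {c : Finset X // c ∈ C}}
    (p : (oneInclusionGraph C).Walk u v) : HasPath C u.1 v.1 p.length := by
  induction p with
  | nil => exact HasPath.refl _ (by exact Subtype.prop _)
  | cons h p ih => exact HasPath.cons _ (Subtype.prop _) h ih

lemma hasPath_walk {C : Finset (Finset X)} {u v : Finset X} {k : ℕ} (h : HasPath C u v k) :
    ∀ (hu : u ∈ C) (hv : v ∈ C),
      ∃ p : (oneInclusionGraph C).Walk ⟨u, hu⟩ ⟨v, hv⟩, p.length = k := by
  induction h with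
  | refl u hu => exact fun _ _ => ⟨SimpleGraph.Walk.nil, rfl⟩
  | @cons w v k u hu h1 hp ih =>
    intro hu' hv
    obtain ⟨p, hplen⟩ := ih hp.left_mem hv
    exact ⟨SimpleGraph.Walk.cons (show (oneInclusionGraph C).Adj ⟨u, hu'⟩ ⟨_, hp.left_mem⟩ from h1) p, by simp [hplen]⟩

lemma isIsometric_iff (C : Finset (Finset X)) :
    IsIsometric C ↔ C.Nonempty ∧ ∀ u ∈ C, ∀ v ∈ C, HasPath C u v (hdist u v) := by
  constructor
  · rintro ⟨hconn, hdisteq⟩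
    refine ⟨?_, ?_⟩
    · obtain ⟨⟨c, hc⟩⟩ := hconn.nonempty
      exact ⟨c, hc⟩
    · intro u hu v hv
      obtain ⟨p, hp⟩ := (hconn ⟨u, hu⟩ ⟨v, hv⟩).exists_walk_length_eq_dist
      have := walk_hasPath p
      rwa [hp, hdisteq ⟨u, hu⟩ ⟨v, hv⟩] at this
  · rintro ⟨hne, h⟩
    have hpre : (oneInclusionGraph C).Preconnected := by
      intro u v
      obtain ⟨p, -⟩ := hasPath_walk (h u.1 u.2 v.1 v.2) u.2 v.2
      exact ⟨p⟩
    haveI : Nonempty {c : Finset X // c ∈ C} := ⟨⟨hne.choose, hne.choose_spec⟩⟩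
    have hconn : (oneInclusionGraph C).Connected := ⟨hpre⟩
    refine ⟨hconn, fun u v => ?_⟩
    have hle : (oneInclusionGraph C).dist u v ≤ hdist u.1 v.1 := by
      obtain ⟨p, hp⟩ := hasPath_walk (h u.1 u.2 v.1 v.2) u.2 v.2
      have h2 := SimpleGraph.dist_le p
      rw [hp] at h2
      exact h2
    have hge : hdist u.1 v.1 ≤ (oneInclusionGraph C).dist u v := by
      obtain ⟨p, hp⟩ := (hconn u v).exists_walk_length_eq_dist
      have := (walk_hasPath p).hdist_le
      omega
    omega

lemma isWeaklyIsometric_iff (C : Finset (Finset X)) :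
    IsWeaklyIsometric C ↔ C.Nonempty ∧ (∀ u ∈ C, ∀ v ∈ C, ∃ k, HasPath C u v k) ∧
      (∀ u ∈ C, ∀ v ∈ C, hdist u v ≤ 2 → HasPath C u v (hdist u v)) := by
  constructor
  · rintro ⟨hconn, hdisteq⟩
    refine ⟨?_, ?_, ?_⟩
    · obtain ⟨⟨c, hc⟩⟩ := hconn.nonempty
      exact ⟨c, hc⟩
    · intro u hu v hv
      obtain ⟨p, hp⟩ := (hconn ⟨u, hu⟩ ⟨v, hv⟩).exists_walk_length_eq_dist
      exact ⟨p.length, walk_hasPath p⟩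
    · intro u hu v hv hle2
      obtain ⟨p, hp⟩ := (hconn ⟨u, hu⟩ ⟨v, hv⟩).exists_walk_length_eq_dist
      have := walk_hasPath p
      rwa [hp, hdisteq ⟨u, hu⟩ ⟨v, hv⟩ hle2] at this
  · rintro ⟨hne, hreach, h⟩
    have hpre : (oneInclusionGraph C).Preconnected := by
      intro u v
      obtain ⟨k, hk⟩ := hreach u.1 u.2 v.1 v.2
      obtain ⟨p, -⟩ := hasPath_walk hk u.2 v.2
      exact ⟨p⟩
    haveI : Nonempty {c : Finset X // c ∈ C} := ⟨⟨hne.choose, hne.choose_spec⟩⟩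
    have hconn : (oneInclusionGraph C).Connected := ⟨hpre⟩
    refine ⟨hconn, fun u v hle2 => ?_⟩
    have hle : (oneInclusionGraph C).dist u v ≤ hdist u.1 v.1 := by
      obtain ⟨p, hp⟩ := hasPath_walk (h u.1 u.2 v.1 v.2 hle2) u.2 v.2
      have h2 := SimpleGraph.dist_le p
      rw [hp] at h2
      exact h2
    have hge : hdist u.1 v.1 ≤ (oneInclusionGraph C).dist u v := by
      obtain ⟨p, hp⟩ := (hconn u v).exists_walk_length_eq_dist
      have := (walk_hasPath p).hdist_le
      omega
    omega

end PartPath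
section PartCube
open scoped symmDiff
variable {X : Type} [Fintype X] [DecidableEq X]

lemma mem_cubeAt {c Y d : Finset X} : d ∈ cubeAt c Y ↔ c ∆ d ⊆ Y := by
  unfold cubeAt
  rw [Finset.mem_image]
  constructor
  · rintro ⟨s, hs, rfl⟩
    rw [Finset.mem_powerset] at hs
    intro z hz
    simp only [Finset.mem_symmDiff, Finset.mem_union, Finset.mem_sdiff] at hz
    rcases hz with ⟨hzc, hz2⟩ | ⟨hz2, hzc⟩
    · by_contra hzY
      exact hz2 (Or.inl ⟨hzc, hzY⟩)
    · rcases hz2 with ⟨h1, -⟩ | hzs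
      · exact absurd h1 hzc
      · exact hs hzs
  · intro hsub
    refine ⟨d ∩ Y, by simp [Finset.mem_powerset], ?_⟩
    ext z
    simp only [Finset.mem_union, Finset.mem_sdiff, Finset.mem_inter]
    by_cases hzY : z ∈ Y
    · simp [hzY]
    · have : z ∉ c ∆ d := fun hz => hzY (hsub hz)
      simp only [Finset.mem_symmDiff] at this
      constructor
      · rintro (⟨hzc, -⟩ | ⟨-, h⟩)
        · tauto
        · exact absurd h hzY
      · intro hzd
        exact Or.inl ⟨by tauto, hzY⟩

lemma self_mem_cubeAt (c Y : Finset X) : c ∈ cubeAt c Y := by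
  rw [mem_cubeAt, symmDiff_self]
  simp [Finset.bot_eq_empty]

lemma cubeAt_mono {c Y Y' : Finset X} (h : Y ⊆ Y') : cubeAt c Y ⊆ cubeAt c Y' := by
  intro d hd
  rw [mem_cubeAt] at hd ⊢
  exact hd.trans h

lemma symmDiff_mem_cubeAt {c Y S : Finset X} (h : S ⊆ Y) : c ∆ S ∈ cubeAt c Y := by
  rw [mem_cubeAt, symmDiff_cancel_left]
  exact h

lemma cubeAt_isCubeS (c Y : Finset X) : IsCubeS (cubeAt c Y) Y := by
  refine ⟨c \ Y, ?_, rfl⟩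
  ext z
  simp only [Finset.mem_inter, Finset.mem_sdiff, Finset.notMem_empty]
  tauto

/-- A cube with support `Y` containing `c` equals `cubeAt c Y`. -/
lemma isCubeS_eq_cubeAt {B : Finset (Finset X)} {Y c : Finset X} (hB : IsCubeS B Y) (hc : c ∈ B) :
    B = cubeAt c Y := by
  obtain ⟨t, ht, rfl⟩ := hB
  rw [Finset.mem_image] at hc
  obtain ⟨s0, hs0, hc⟩ := hc
  rw [Finset.mem_powerset] at hs0
  have hct : c \ Y = t := by
    subst hc
    ext z
    simp only [Finset.mem_sdiff, Finset.mem_union]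
    constructor
    · rintro ⟨hz | hz, hzY⟩
      · exact hz
      · exact absurd (hs0 hz) hzY
    · intro hz
      have : z ∉ Y := fun hzY => by
        have := Finset.mem_inter.2 ⟨hz, hzY⟩
        rw [ht] at this
        exact absurd this (Finset.notMem_empty z)
      exact ⟨Or.inl hz, this⟩
  unfold cubeAt
  rw [hct]

lemma cubeAt_subset_pair {c a : Finset X} (h : hdist c a = 1) :
    cubeAt c (c ∆ a) ⊆ {c, a} := by
  intro d hd
  rw [mem_cubeAt] at hd
  obtain ⟨z, hz⟩ := hdist_one_iff.mp h
  rw [hz, Finset.subset_singleton_iff] at hd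
  simp only [Finset.mem_insert, Finset.mem_singleton]
  rcases hd with hd | hd
  · left
    have : c ∆ d = ⊥ := by rw [hd]; rfl
    rw [symmDiff_eq_bot] at this
    exact this.symm
  · right
    have : c ∆ d = c ∆ a := by rw [hd, hz]
    have := congrArg (fun s => c ∆ s) this
    simpa [symmDiff_cancel_left] using this

/-- Every cube of `C` extends to a maximal cube of `C`. -/
lemma exists_maximal_cube {C Q : Finset (Finset X)} (hQ : IsCubeOf C Q) :
    ∃ M, IsMaximalCubeOf C M ∧ Q ⊆ M := by
  classical
  let S : Finset (Finset (Finset X)) := C.powerset.filter (fun B => IsCubeOf C B ∧ Q ⊆ B)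
  have hQS : Q ∈ S := by
    simp only [S, Finset.mem_filter, Finset.mem_powerset]
    exact ⟨hQ.1, hQ, Finset.Subset.refl Q⟩
  obtain ⟨M, hMS, hMmax⟩ := S.exists_max_image Finset.card ⟨Q, hQS⟩
  simp only [S, Finset.mem_filter, Finset.mem_powerset] at hMS
  obtain ⟨hMC, hMcube, hQM⟩ := hMS
  refine ⟨M, ⟨hMcube, ?_⟩, hQM⟩
  intro B' hB' hMB'
  have hB'S : B' ∈ S := by
    simp only [S, Finset.mem_filter, Finset.mem_powerset]
    exact ⟨hB'.1, hB', hQM.trans hMB'⟩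
  exact Finset.eq_of_subset_of_card_le hMB' (hMmax B' hB'S)

/-- For a corner `c` of `C`, there is `Y` such that the unique maximal cube containing `c`
is `cubeAt c Y`, and every cube of `C` containing `c` is contained in it. -/
lemma corner_cube {C : Finset (Finset X)} {c : Finset X} (h : IsCornerOf C c) :
    ∃ Y, IsCubeOf C (cubeAt c Y) ∧
      ∀ Q, IsCubeOf C Q → c ∈ Q → Q ⊆ cubeAt c Y := by
  obtain ⟨hcC, B, ⟨hBmax, hcB⟩, hBuniq⟩ := h
  obtain ⟨Y, hBY⟩ := hBmax.1.2
  have hBeq : B = cubeAt c Y := isCubeS_eq_cubeAt hBY hcB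
  refine ⟨Y, hBeq ▸ hBmax.1, ?_⟩
  intro Q hQ hcQ
  obtain ⟨M, hMmax, hQM⟩ := exists_maximal_cube hQ
  have hMB : M = B := hBuniq M ⟨hMmax, hQM hcQ⟩
  exact hBeq ▸ hMB ▸ hQM

end PartCube
section PartAmple
open scoped symmDiff
variable {X : Type} [Fintype X] [DecidableEq X]

lemma mem_shatteredSets {C : Finset (Finset X)} {Y : Finset X} :
    Y ∈ shatteredSets C ↔ Shatters C Y := by
  simp [shatteredSets]

lemma shatters_mono {C D : Finset (Finset X)} {Y : Finset X} (h : C ⊆ D)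
    (hY : Shatters C Y) : Shatters D Y := by
  intro s hs
  obtain ⟨c, hc, hcs⟩ := hY s hs
  exact ⟨c, h hc, hcs⟩

lemma shatteredSets_mono {C D : Finset (Finset X)} (h : C ⊆ D) :
    shatteredSets C ⊆ shatteredSets D := by
  intro Y hY
  rw [mem_shatteredSets] at hY ⊢
  exact shatters_mono h hY

lemma shatters_empty_iff {C : Finset (Finset X)} : Shatters C ∅ ↔ C.Nonempty := by
  constructor
  · intro h
    obtain ⟨c, hc, -⟩ := h ∅ (by simp)
    exact ⟨c, hc⟩
  · rintro ⟨c, hc⟩ s hs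
    simp only [Finset.powerset_empty, Finset.mem_singleton] at hs
    exact ⟨c, hc, by simp [hs]⟩

lemma shatteredSets_empty : shatteredSets (∅ : Finset (Finset X)) = ∅ := by
  ext Y
  simp only [mem_shatteredSets, Finset.notMem_empty, iff_false]
  intro h
  obtain ⟨c, hc, -⟩ := h ∅ (by simp)
  exact absurd hc (Finset.notMem_empty c)

lemma ample_empty : IsAmple (∅ : Finset (Finset X)) := by
  simp [IsAmple, shatteredSets_empty]

lemma shatteredSets_singleton (c : Finset X) :
    shatteredSets ({c} : Finset (Finset X)) = {∅} := by
  ext Y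
  simp only [mem_shatteredSets, Finset.mem_singleton]
  constructor
  · intro h
    by_contra hY
    obtain ⟨y, hy⟩ := Finset.nonempty_iff_ne_empty.2 hY
    obtain ⟨c1, hc1, h1⟩ := h ∅ (by simp)
    obtain ⟨c2, hc2, h2⟩ := h {y} (by simp [Finset.singleton_subset_iff, hy])
    rw [Finset.mem_singleton] at hc1 hc2
    subst hc1; subst hc2
    rw [h1] at h2
    exact absurd h2.symm (Finset.singleton_ne_empty y)
  · rintro rfl
    rw [shatters_empty_iff]
    exact ⟨c, Finset.mem_singleton_self c⟩

lemma ample_singleton (c : Finset X) : IsAmple ({c} : Finset (Finset X)) := by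
  simp [IsAmple, shatteredSets_singleton]

/-- The fundamental counting identity `|C| = |C_x| + |C^x|`. -/
lemma card_split (C : Finset (Finset X)) (x : X) :
    C.card = (restrictX C x).card + (reduction C x).card := by
  classical
  set A := C.filter (fun c => x ∉ c) with hA
  set B := C.filter (fun c => x ∈ c) with hB
  have hCAB : C = A ∪ B := by
    rw [hA, hB]
    ext c
    simp only [Finset.mem_union, Finset.mem_filter]
    tauto
  have hAB : Disjoint A B := by
    rw [Finset.disjoint_left]
    intro c hc hc'
    rw [hA, Finset.mem_filter] at hc
    rw [hB, Finset.mem_filter] at hc'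
    exact hc.2 hc'.2
  have himA : A.image (fun c => c.erase x) = A := by
    ext d
    simp only [Finset.mem_image, hA, Finset.mem_filter]
    constructor
    · rintro ⟨c, ⟨hcC, hcx⟩, rfl⟩
      rw [Finset.erase_eq_self.2 hcx]
      exact ⟨hcC, hcx⟩
    · rintro ⟨hdC, hdx⟩
      exact ⟨d, ⟨hdC, hdx⟩, Finset.erase_eq_self.2 hdx⟩
  have hrestr : restrictX C x = A ∪ B.image (fun c => c.erase x) := by
    unfold restrictX
    conv_lhs => rw [hCAB]
    rw [Finset.image_union, himA]
  have hBcard : (B.image (fun c => c.erase x)).card = B.card := by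
    apply Finset.card_image_of_injOn
    intro c1 h1 c2 h2 heq
    simp only [hB, Finset.mem_coe, Finset.mem_filter] at h1 h2
    simp only [] at heq
    rw [← Finset.insert_erase h1.2, ← Finset.insert_erase h2.2, heq]
  have hIcap : A ∩ B.image (fun c => c.erase x) = reduction C x := by
    unfold reduction
    ext d
    simp only [Finset.mem_inter, Finset.mem_image, hA, hB, Finset.mem_filter]
    constructor
    · rintro ⟨⟨hdC, hdx⟩, c, ⟨hcC, hcx⟩, rfl⟩
      refine ⟨hdC, hdx, ?_⟩
      rwa [Finset.insert_erase hcx]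
    · rintro ⟨hdC, hdx, hins⟩
      exact ⟨⟨hdC, hdx⟩, insert x d, ⟨hins, Finset.mem_insert_self x d⟩,
        Finset.erase_insert hdx⟩
  have h1 := Finset.card_union_add_card_inter A (B.image (fun c => c.erase x))
  have h2 : C.card = A.card + B.card := by
    rw [hCAB, Finset.card_union_of_disjoint hAB]
  rw [hrestr, ← hIcap]
  omega

end PartAmple
section PartShatterSplit
open scoped symmDiff
variable {X : Type} [Fintype X] [DecidableEq X]

lemma erase_inter_of_not_mem {c Y : Finset X} {x : X} (h : x ∉ Y) :
    (c.erase x) ∩ Y = c ∩ Y := by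
  ext z
  simp only [Finset.mem_inter, Finset.mem_erase]
  constructor
  · tauto
  · rintro ⟨hz, hzY⟩
    exact ⟨⟨fun he => h (he ▸ hzY), hz⟩, hzY⟩

lemma inter_insert_of_not_mem {c Y : Finset X} {x : X} (h : x ∉ c) :
    c ∩ insert x Y = c ∩ Y := by
  ext z
  simp only [Finset.mem_inter, Finset.mem_insert]
  constructor
  · rintro ⟨hz, rfl | hzY⟩
    · exact absurd hz h
    · exact ⟨hz, hzY⟩
  · tauto

lemma mem_reduction {C : Finset (Finset X)} {x : X} {c : Finset X} :
    c ∈ reduction C x ↔ c ∈ C ∧ x ∉ c ∧ insert x c ∈ C := by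
  unfold reduction
  simp [Finset.mem_filter]

lemma sh_restrict_not_mem {C : Finset (Finset X)} {x : X} {Y : Finset X}
    (h : Shatters (restrictX C x) Y) : x ∉ Y := by
  intro hxY
  obtain ⟨c, hc, hcs⟩ := h {x} (by simp [Finset.singleton_subset_iff, hxY])
  unfold restrictX at hc
  rw [Finset.mem_image] at hc
  obtain ⟨c', -, rfl⟩ := hc
  have : x ∈ c'.erase x ∩ Y := hcs ▸ Finset.mem_singleton_self x
  exact absurd (Finset.mem_inter.1 this).1 (Finset.notMem_erase x c')

lemma sh_restrict_shatters {C : Finset (Finset X)} {x : X} {Y : Finset X}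
    (h : Shatters (restrictX C x) Y) : Shatters C Y := by
  have hxY := sh_restrict_not_mem h
  intro s hs
  obtain ⟨c, hc, hcs⟩ := h s hs
  unfold restrictX at hc
  rw [Finset.mem_image] at hc
  obtain ⟨c', hc', rfl⟩ := hc
  exact ⟨c', hc', by rwa [erase_inter_of_not_mem hxY] at hcs⟩

lemma sh_reduction_not_mem {C : Finset (Finset X)} {x : X} {Y : Finset X}
    (h : Shatters (reduction C x) Y) : x ∉ Y := by
  intro hxY
  obtain ⟨c, hc, hcs⟩ := h {x} (by simp [Finset.singleton_subset_iff, hxY])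
  rw [mem_reduction] at hc
  have : x ∈ c ∩ Y := hcs ▸ Finset.mem_singleton_self x
  exact absurd (Finset.mem_inter.1 this).1 hc.2.1

lemma sh_reduction_shatters {C : Finset (Finset X)} {x : X} {Y : Finset X}
    (h : Shatters (reduction C x) Y) : Shatters C (insert x Y) := by
  have hxY := sh_reduction_not_mem h
  intro s hs
  rw [Finset.mem_powerset] at hs
  have hs' : s.erase x ∈ Y.powerset := by
    rw [Finset.mem_powerset]
    intro z hz
    rw [Finset.mem_erase] at hz
    have := hs hz.2
    rw [Finset.mem_insert] at this
    tauto
  obtain ⟨c, hc, hcs⟩ := h (s.erase x) hs'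
  rw [mem_reduction] at hc
  obtain ⟨hcC, hxc, hins⟩ := hc
  by_cases hxs : x ∈ s
  · refine ⟨insert x c, hins, ?_⟩
    ext z
    simp only [Finset.mem_inter, Finset.mem_insert]
    by_cases hz : z = x
    · subst hz; simp [hxs]
    · have hiff : (z ∈ c ∧ z ∈ Y) ↔ z ∈ s.erase x := by
        rw [← Finset.mem_inter, hcs]
      constructor
      · rintro ⟨hz1 | hz1, hz2 | hz2⟩
        · exact absurd hz1 hz
        · exact absurd hz1 hz
        · exact absurd hz2 hz
        · exact (Finset.mem_erase.1 (hiff.1 ⟨hz1, hz2⟩)).2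
      · intro hzs
        have h' := hiff.2 (Finset.mem_erase.2 ⟨hz, hzs⟩)
        exact ⟨Or.inr h'.1, Or.inr h'.2⟩
  · refine ⟨c, hcC, ?_⟩
    rw [inter_insert_of_not_mem hxc, hcs, Finset.erase_eq_self.2 hxs]

lemma shattered_card_split (C : Finset (Finset X)) (x : X) :
    (shatteredSets (restrictX C x)).card + (shatteredSets (reduction C x)).card ≤
      (shatteredSets C).card := by
  classical
  set S1 := shatteredSets (restrictX C x)
  set S2' := (shatteredSets (reduction C x)).image (insert x)
  have hcard2 : S2'.card = (shatteredSets (reduction C x)).card := by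
    apply Finset.card_image_of_injOn
    intro Y1 h1 Y2 h2 heq
    simp only [Finset.mem_coe, mem_shatteredSets] at h1 h2
    have hx1 := sh_reduction_not_mem h1
    have hx2 := sh_reduction_not_mem h2
    rw [← Finset.erase_insert hx1, ← Finset.erase_insert hx2, heq]
  have hsub : S1 ∪ S2' ⊆ shatteredSets C := by
    intro Y hY
    rw [Finset.mem_union] at hY
    rcases hY with hY | hY
    · rw [mem_shatteredSets] at hY ⊢
      exact sh_restrict_shatters hY
    · rw [Finset.mem_image] at hY
      obtain ⟨Y', hY', rfl⟩ := hY
      rw [mem_shatteredSets] at hY' ⊢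
      exact sh_reduction_shatters hY'
  have hdisj : Disjoint S1 S2' := by
    rw [Finset.disjoint_left]
    intro Y hY1 hY2
    rw [mem_shatteredSets] at hY1
    have := sh_restrict_not_mem hY1
    rw [Finset.mem_image] at hY2
    obtain ⟨Y', -, rfl⟩ := hY2
    exact this (Finset.mem_insert_self x Y')
  calc S1.card + (shatteredSets (reduction C x)).card = S1.card + S2'.card := by rw [hcard2]
    _ = (S1 ∪ S2').card := (Finset.card_union_of_disjoint hdisj).symm
    _ ≤ (shatteredSets C).card := Finset.card_le_card hsub

end PartShatterSplit
section PartPajor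
open scoped symmDiff
variable {X : Type} [Fintype X] [DecidableEq X]

lemma sum_image_le' {α β : Type*} [DecidableEq β] (s : Finset α) (f : α → β) (g : β → ℕ) :
    ∑ d ∈ s.image f, g d ≤ ∑ c ∈ s, g (f c) := by
  classical
  induction s using Finset.induction_on with
  | empty => simp
  | @insert a s ha ih =>
    rw [Finset.image_insert, Finset.sum_insert ha]
    by_cases hfa : f a ∈ s.image f
    · rw [Finset.insert_eq_self.2 hfa]
      omega
    · rw [Finset.sum_insert hfa]
      omega

lemma reduction_ssubset {C : Finset (Finset X)} (hne : C.Nonempty) (x : X) :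
    reduction C x ⊂ C := by
  refine ⟨Finset.filter_subset _ _, ?_⟩
  intro hsub
  obtain ⟨c, hcC, hcmax⟩ := C.exists_max_image Finset.card hne
  have hc : c ∈ reduction C x := hsub hcC
  rw [mem_reduction] at hc
  have := hcmax (insert x c) (hc.2.2)
  rw [Finset.card_insert_of_notMem hc.2.1] at this
  omega

lemma mu_reduction_lt {C : Finset (Finset X)} (hne : C.Nonempty) (x : X) :
    ∑ c ∈ reduction C x, (c.card + 1) < ∑ c ∈ C, (c.card + 1) := by
  obtain ⟨hsub, hne'⟩ := reduction_ssubset hne x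
  obtain ⟨c, hcC, hcred⟩ : ∃ c ∈ C, c ∉ reduction C x := by
    by_contra h
    push_neg at h
    exact hne' (fun c hc => h c hc)
  exact Finset.sum_lt_sum_of_subset hsub hcC hcred (by omega) (fun j _ _ => by omega)

lemma mu_restrict_lt {C : Finset (Finset X)} {c0 : Finset X} {x : X}
    (hc0 : c0 ∈ C) (hx : x ∈ c0) :
    ∑ c ∈ restrictX C x, (c.card + 1) < ∑ c ∈ C, (c.card + 1) := by
  have h1 : ∑ c ∈ restrictX C x, (c.card + 1) ≤ ∑ c ∈ C, ((c.erase x).card + 1) :=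
    sum_image_le' C (fun c => c.erase x) (fun d => d.card + 1)
  have h2 : ∑ c ∈ C, ((c.erase x).card + 1) < ∑ c ∈ C, (c.card + 1) := by
    apply Finset.sum_lt_sum
    · intro i _
      have := Finset.card_erase_le (a := x) (s := i)
      omega
    · refine ⟨c0, hc0, ?_⟩
      rw [Finset.card_erase_of_mem hx]
      have : 0 < c0.card := Finset.card_pos.2 ⟨x, hx⟩
      omega
  omega

/-- Pajor's inequality: `|C| ≤ |X̄(C)|`. -/
lemma pajor (C : Finset (Finset X)) : C.card ≤ (shatteredSets C).card := by
  classical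
  suffices h : ∀ n, ∀ C : Finset (Finset X), ∑ c ∈ C, (c.card + 1) ≤ n →
      C.card ≤ (shatteredSets C).card by
    exact h _ C le_rfl
  intro n
  induction n using Nat.strong_induction_on with
  | _ n ih =>
    intro C hμ
    by_cases hex : ∃ x, ∃ c ∈ C, x ∈ c
    · obtain ⟨x, c0, hc0, hxc0⟩ := hex
      have hne : C.Nonempty := ⟨c0, hc0⟩
      have hr1 := mu_restrict_lt hc0 hxc0
      have hr2 := mu_reduction_lt hne x
      have h1 : (restrictX C x).card ≤ (shatteredSets (restrictX C x)).card :=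
        ih _ (by omega) _ le_rfl
      have h2 : (reduction C x).card ≤ (shatteredSets (reduction C x)).card :=
        ih _ (by omega) _ le_rfl
      have h3 := card_split C x
      have h4 := shattered_card_split C x
      omega
    · push_neg at hex
      have hsub : C ⊆ {∅} := by
        intro c hc
        rw [Finset.mem_singleton]
        exact Finset.eq_empty_iff_forall_notMem.2 (fun x hx => hex x c hc hx)
      rcases Finset.subset_singleton_iff.1 hsub with rfl | rfl
      · simp
      · rw [shatteredSets_singleton]

/-- For ample `C`, the reduction is ample and newly shattered sets through `x`
come from the reduction. -/
lemma ample_split {C : Finset (Finset X)} (hA : IsAmple C) (x : X) :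
    IsAmple (reduction C x) ∧
      ∀ Y ∈ shatteredSets C, x ∈ Y → Y.erase x ∈ shatteredSets (reduction C x) := by
  classical
  have h1 := pajor (restrictX C x)
  have h2 := pajor (reduction C x)
  have h3 := card_split C x
  have h4 := shattered_card_split C x
  have hAc : C.card = (shatteredSets C).card := hA
  -- set up the union
  set S1 := shatteredSets (restrictX C x) with hS1
  set S2' := (shatteredSets (reduction C x)).image (insert x) with hS2'
  have hcard2 : S2'.card = (shatteredSets (reduction C x)).card := by
    apply Finset.card_image_of_injOn
    intro Y1 hY1 Y2 hY2 heq
    simp only [Finset.mem_coe, mem_shatteredSets] at hY1 hY2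
    have hx1 := sh_reduction_not_mem hY1
    have hx2 := sh_reduction_not_mem hY2
    rw [← Finset.erase_insert hx1, ← Finset.erase_insert hx2, heq]
  have hsub : S1 ∪ S2' ⊆ shatteredSets C := by
    intro Y hY
    rw [Finset.mem_union] at hY
    rcases hY with hY | hY
    · rw [hS1, mem_shatteredSets] at hY
      rw [mem_shatteredSets]
      exact sh_restrict_shatters hY
    · rw [hS2', Finset.mem_image] at hY
      obtain ⟨Y', hY', rfl⟩ := hY
      rw [mem_shatteredSets] at hY' ⊢
      exact sh_reduction_shatters hY'
  have hdisj : Disjoint S1 S2' := by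
    rw [Finset.disjoint_left]
    intro Y hY1 hY2
    rw [hS1, mem_shatteredSets] at hY1
    have := sh_restrict_not_mem hY1
    rw [hS2', Finset.mem_image] at hY2
    obtain ⟨Y', -, rfl⟩ := hY2
    exact this (Finset.mem_insert_self x Y')
  have hucard : (S1 ∪ S2').card = S1.card + S2'.card := Finset.card_union_of_disjoint hdisj
  have hle : (shatteredSets C).card ≤ (S1 ∪ S2').card := by
    have := Finset.card_le_card hsub
    omega
  have heq : S1 ∪ S2' = shatteredSets C :=
    Finset.eq_of_subset_of_card_le hsub hle
  constructor
  · unfold IsAmple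
    omega
  · intro Y hY hxY
    rw [← heq, Finset.mem_union] at hY
    rcases hY with hY | hY
    · rw [hS1, mem_shatteredSets] at hY
      exact absurd hxY (sh_restrict_not_mem hY)
    · rw [hS2', Finset.mem_image] at hY
      obtain ⟨Y', hY', rfl⟩ := hY
      rwa [Finset.erase_insert (sh_reduction_not_mem (mem_shatteredSets.1 hY'))]

/-- In an ample class, every shattered set supports a cube. -/
lemma ample_shattered_cube {C : Finset (Finset X)} (hA : IsAmple C) {Y : Finset X}
    (hY : Y ∈ shatteredSets C) : ∃ B, B ⊆ C ∧ IsCubeS B Y := by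
  classical
  suffices h : ∀ n, ∀ C : Finset (Finset X), C.card ≤ n → IsAmple C →
      ∀ Y ∈ shatteredSets C, ∃ B, B ⊆ C ∧ IsCubeS B Y by
    exact h _ C le_rfl hA Y hY
  clear hA hY C Y
  intro n
  induction n using Nat.strong_induction_on with
  | _ n ih =>
    intro C hn hA Y hY
    rw [mem_shatteredSets] at hY
    by_cases hYe : Y = ∅
    · subst hYe
      obtain ⟨c, hc⟩ := shatters_empty_iff.1 hY
      refine ⟨{c}, Finset.singleton_subset_iff.2 hc, c, by simp, ?_⟩
      simp
    · obtain ⟨x, hx⟩ := Finset.nonempty_iff_ne_empty.2 hYe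
      have hCne : C.Nonempty := by
        obtain ⟨c, hc, -⟩ := hY ∅ (by simp)
        exact ⟨c, hc⟩
      obtain ⟨hAred, hshift⟩ := ample_split hA x
      have hY' : Y.erase x ∈ shatteredSets (reduction C x) :=
        hshift Y (mem_shatteredSets.2 hY) hx
      have hcard : (reduction C x).card < n := by
        have := Finset.card_lt_card (reduction_ssubset hCne x)
        omega
      obtain ⟨B, hBsub, t, ht, hBeq⟩ := ih _ hcard _ le_rfl hAred _ hY'
      have htB : t ∈ B := by
        rw [hBeq, Finset.mem_image]
        exact ⟨∅, by simp, by simp⟩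
      have hxt : x ∉ t := ((mem_reduction).1 (hBsub htB)).2.1
      have htY : t ∩ Y = ∅ := by
        rw [Finset.eq_empty_iff_forall_notMem]
        intro z hz
        rw [Finset.mem_inter] at hz
        have hzx : z ≠ x := fun h => hxt (h ▸ hz.1)
        have : z ∈ t ∩ Y.erase x := Finset.mem_inter.2 ⟨hz.1, Finset.mem_erase.2 ⟨hzx, hz.2⟩⟩
        rw [ht] at this
        exact absurd this (Finset.notMem_empty z)
      refine ⟨Y.powerset.image (fun s => t ∪ s), ?_, t, htY, rfl⟩
      intro u hu
      rw [Finset.mem_image] at hu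
      obtain ⟨s, hs, rfl⟩ := hu
      rw [Finset.mem_powerset] at hs
      have hs' : s.erase x ∈ (Y.erase x).powerset := by
        rw [Finset.mem_powerset]
        exact Finset.erase_subset_erase x hs
      have hmem : t ∪ s.erase x ∈ B := by
        rw [hBeq, Finset.mem_image]
        exact ⟨s.erase x, hs', rfl⟩
      have hred := (mem_reduction).1 (hBsub hmem)
      by_cases hxs : x ∈ s
      · have : t ∪ s = insert x (t ∪ s.erase x) := by
          rw [← Finset.union_insert, Finset.insert_erase hxs]
        rw [this]
        exact hred.2.2
      · rw [show s.erase x = s from Finset.erase_eq_self.2 hxs] at hred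
        exact hred.1
end PartPajor
section PartSteps
open scoped symmDiff
variable {X : Type} [Fintype X] [DecidableEq X]

lemma flip_symmDiff (c : Finset X) (z : X) : (c ∆ {z}) ∆ c = {z} := by
  rw [symmDiff_comm, symmDiff_cancel_left]

lemma flip_inter_eq {c Y : Finset X} {z : X} (h : z ∉ Y) : (c ∆ {z}) ∩ Y = c ∩ Y := by
  apply inter_eq_of_not_mem_symmDiff
  intro w hw
  rw [flip_symmDiff, Finset.mem_singleton] at hw
  subst hw
  exact h

lemma symmDiff_split (a c b : Finset X) : a ∆ b = (a ∆ c) ∆ (c ∆ b) := by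
  rw [symmDiff_assoc, symmDiff_cancel_left]

lemma missing_pattern {C' : Finset (Finset X)} {c Y : Finset X}
    (hsh : Shatters (insert c C') Y) (hnsh : ¬ Shatters C' Y) :
    ∀ d ∈ C', d ∩ Y ≠ c ∩ Y := by
  intro d hd heq
  apply hnsh
  intro s hs
  obtain ⟨e, he, hes⟩ := hsh s hs
  rw [Finset.mem_insert] at he
  rcases he with rfl | he
  · exact ⟨d, hd, by rw [heq, hes]⟩
  · exact ⟨e, he, hes⟩

/-- Path surgery: removing `c` when all 2-gaps around `c` can be patched. -/
lemma HasPath.decons {C : Finset (Finset X)} {u v : Finset X} {k : ℕ}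
    (h : HasPath C u v (k + 1)) : ∃ w, hdist u w = 1 ∧ HasPath C w v k := by
  cases h with
  | cons u hu h1 hp => exact ⟨_, h1, hp⟩

lemma hasPath_erase {C : Finset (Finset X)} {c : Finset X}
    (R : ∀ a ∈ C.erase c, ∀ b ∈ C.erase c, hdist a c = 1 → hdist c b = 1 → hdist a b = 2 →
      ∃ m ∈ C.erase c, hdist a m = 1 ∧ hdist m b = 1) :
    ∀ k, ∀ u v : Finset X, u ∈ C.erase c → v ∈ C.erase c → HasPath C u v k →
      hdist u v = k → HasPath (C.erase c) u v k := by
  intro k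
  induction k using Nat.strong_induction_on with
  | _ k ihk =>
    intro u v hu hv hp hd
    rcases k with _ | k1
    · cases hp with
      | refl => exact HasPath.refl u hu
    · obtain ⟨w, h1, hp'⟩ := hp.decons
      have hle := hp'.hdist_le
      have htri := hdist_triangle u w v
      have hwv : hdist w v = k1 := by omega
      by_cases hwc : w = c
      · have hvc : v ≠ c := (Finset.mem_erase.1 hv).1
        have hk1 : k1 ≠ 0 := by
          intro h
          rw [h] at hwv
          exact hvc ((hdist_eq_zero_iff.1 hwv).symm.trans hwc)
        obtain ⟨k2, rfl⟩ : ∃ k2, k1 = k2 + 1 := ⟨k1 - 1, by omega⟩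
        obtain ⟨w2, h2, hp2⟩ := hp'.decons
        have hle2 := hp2.hdist_le
        have htri2 := hdist_triangle w w2 v
        have hw2v : hdist w2 v = k2 := by omega
        have hw2c : w2 ≠ c := by
          intro h
          rw [hwc, h, hdist_self'] at h2
          omega
        have hw2 : w2 ∈ C.erase c := Finset.mem_erase.2 ⟨hw2c, hp2.left_mem⟩
        have hu2 : hdist u w2 = 2 := by
          have t3 := hdist_triangle u w w2
          have t4 := hdist_triangle u w2 v
          omega
        obtain ⟨m, hm, hm1, hm2⟩ := R u hu w2 hw2 (by rw [← hwc]; exact h1)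
          (by rw [← hwc]; exact h2) hu2
        have hrec := ihk k2 (by omega) w2 v hw2 hv hp2 hw2v
        exact HasPath.cons u hu hm1 (HasPath.cons m hm hm2 hrec)
      · have hw : w ∈ C.erase c := Finset.mem_erase.2 ⟨hwc, hp'.left_mem⟩
        exact HasPath.cons u hu h1 (ihk k1 (by omega) w v hw hv hp' hwv)

lemma iso_erase_of_weak {C : Finset (Finset X)} {c : Finset X}
    (hiso : IsIsometric C) (hweak : IsWeaklyIsometric (C.erase c)) :
    IsIsometric (C.erase c) := by
  rw [isIsometric_iff] at hiso ⊢
  rw [isWeaklyIsometric_iff] at hweak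
  obtain ⟨hne, -, hw2⟩ := hweak
  refine ⟨hne, fun u hu v hv => ?_⟩
  have R : ∀ a ∈ C.erase c, ∀ b ∈ C.erase c, hdist a c = 1 → hdist c b = 1 → hdist a b = 2 →
      ∃ m ∈ C.erase c, hdist a m = 1 ∧ hdist m b = 1 := by
    intro a ha b hb _ _ hab2
    have hpath := hw2 a ha b hb (by omega)
    rw [hab2] at hpath
    cases hpath with
    | @cons m _ _ _ hu' hm1 hp1 =>
      cases hp1 with
      | @cons m2 _ _ _ hm' hm2 hp2 =>
        cases hp2 with
        | refl => exact ⟨m, hm', hm1, hm2⟩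
  exact hasPath_erase R _ u v hu hv
    (hiso.2 u (Finset.mem_of_mem_erase hu) v (Finset.mem_of_mem_erase hv)) rfl

lemma pair_symmDiff_left {y z : X} (h : y ≠ z) : ({y, z} : Finset X) ∆ {y} = {z} := by
  ext w
  by_cases h1 : w = y <;> by_cases h2 : w = z <;>
    simp only [Finset.mem_symmDiff, Finset.mem_insert, Finset.mem_singleton, h1, h2] <;>
    first
      | (exfalso; exact h (h1 ▸ h2 ▸ rfl))
      | tauto

lemma pair_symmDiff_right {y z : X} (h : y ≠ z) : ({y, z} : Finset X) ∆ {z} = {y} := by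
  have : ({y, z} : Finset X) = {z, y} := by
    ext w; simp [Finset.mem_insert]; tauto
  rw [this, pair_symmDiff_left (Ne.symm h)]

lemma iso_erase_of_corner {C : Finset (Finset X)} {c : Finset X}
    (hiso : IsIsometric C) (hcor : IsCornerOf C c) (hne : (C.erase c).Nonempty) :
    IsIsometric (C.erase c) := by
  rw [isIsometric_iff] at hiso ⊢
  obtain ⟨Y, hcube, hall⟩ := corner_cube hcor
  refine ⟨hne, fun u hu v hv => ?_⟩
  have R : ∀ a ∈ C.erase c, ∀ b ∈ C.erase c, hdist a c = 1 → hdist c b = 1 → hdist a b = 2 →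
      ∃ m ∈ C.erase c, hdist a m = 1 ∧ hdist m b = 1 := by
    intro a ha b hb hac hcb hab2
    have hca : hdist c a = 1 := by rw [hdist_comm']; exact hac
    have haC : a ∈ C := Finset.mem_of_mem_erase ha
    have hbC : b ∈ C := Finset.mem_of_mem_erase hb
    have hedge_a : IsCubeOf C (cubeAt c (c ∆ a)) :=
      ⟨(cubeAt_subset_pair hca).trans (by
          intro t ht
          rcases Finset.mem_insert.1 ht with rfl | ht
          · exact hcor.1
          · rw [Finset.mem_singleton] at ht
            exact ht ▸ haC),
        ⟨c ∆ a, cubeAt_isCubeS c (c ∆ a)⟩⟩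
    have hedge_b : IsCubeOf C (cubeAt c (c ∆ b)) :=
      ⟨(cubeAt_subset_pair hcb).trans (by
          intro t ht
          rcases Finset.mem_insert.1 ht with rfl | ht
          · exact hcor.1
          · rw [Finset.mem_singleton] at ht
            exact ht ▸ hbC),
        ⟨c ∆ b, cubeAt_isCubeS c (c ∆ b)⟩⟩
    have haY : c ∆ a ⊆ Y :=
      mem_cubeAt.1 (hall _ hedge_a (self_mem_cubeAt _ _) (mem_cubeAt.2 (Finset.Subset.refl _)))
    have hbY : c ∆ b ⊆ Y :=
      mem_cubeAt.1 (hall _ hedge_b (self_mem_cubeAt _ _) (mem_cubeAt.2 (Finset.Subset.refl _)))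
    obtain ⟨y, hy⟩ := hdist_one_iff.1 hca
    obtain ⟨z, hz⟩ := hdist_one_iff.1 hcb
    have hyz : y ≠ z := by
      intro h
      have : a = b := by
        have h2 : c ∆ a = c ∆ b := by rw [hy, hz, h]
        have := congrArg (fun s => c ∆ s) h2
        simpa [symmDiff_cancel_left] using this
      rw [this, hdist_self'] at hab2
      omega
    have hyY : y ∈ Y := haY (hy ▸ Finset.mem_singleton_self y)
    have hzY : z ∈ Y := hbY (hz ▸ Finset.mem_singleton_self z)
    set m := c ∆ {y, z} with hm
    have hmY : m ∈ cubeAt c Y := by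
      rw [mem_cubeAt, hm, symmDiff_cancel_left]
      intro w hw
      rcases Finset.mem_insert.1 hw with rfl | hw
      · exact hyY
      · rw [Finset.mem_singleton] at hw
        exact hw ▸ hzY
    have hmC : m ∈ C := hcube.1 hmY
    have hmc : m ≠ c := by
      intro h
      have : c ∆ m = (∅ : Finset X) := by rw [h]; simp
      rw [hm, symmDiff_cancel_left] at this
      exact absurd this (Finset.insert_ne_empty y {z})
    have ham : hdist a m = 1 := by
      have hcalc : a ∆ m = ({y} : Finset X) ∆ {y, z} := by
        have h1 : a ∆ m = (a ∆ c) ∆ (c ∆ m) := symmDiff_split a c m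
        rw [h1, hm, symmDiff_cancel_left, symmDiff_comm a c, hy]
      rw [hdist_eq_symmDiff, hcalc, symmDiff_comm, pair_symmDiff_left hyz]
      simp
    have hmb : hdist m b = 1 := by
      have hcalc : m ∆ b = ({y, z} : Finset X) ∆ {z} := by
        have h1 : m ∆ b = (m ∆ c) ∆ (c ∆ b) := symmDiff_split m c b
        rw [h1, hm, symmDiff_comm (c ∆ {y, z}) c, symmDiff_cancel_left, hz]
      rw [hdist_eq_symmDiff, hcalc, pair_symmDiff_right hyz]
      simp
    exact ⟨m, Finset.mem_erase.2 ⟨hmc, hmC⟩, ham, hmb⟩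
  exact hasPath_erase R _ u v hu hv
    (hiso.2 u (Finset.mem_of_mem_erase hu) v (Finset.mem_of_mem_erase hv)) rfl

end PartSteps
section PartMainSteps
open scoped symmDiff
variable {X : Type} [Fintype X] [DecidableEq X]

lemma symmDiff_subset_union (a b : Finset X) : a ∆ b ⊆ a ∪ b := by
  intro z hz
  rw [Finset.mem_symmDiff] at hz
  rw [Finset.mem_union]
  tauto

/-- If `C'` is ample and `insert c C'` is isometric then `insert c C'` is ample. -/
lemma ample_step {C' : Finset (Finset X)} {c : Finset X} (hc : c ∉ C')
    (hA' : IsAmple C') (hiso : IsIsometric (insert c C')) : IsAmple (insert c C') := by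
  classical
  have hpaj := pajor (insert c C')
  have hcard : (insert c C').card = C'.card + 1 := Finset.card_insert_of_notMem hc
  set New := (shatteredSets (insert c C')).filter (fun Y => Y ∉ shatteredSets C') with hNewdef
  have hmiss : ∀ Y ∈ New, ∀ d ∈ C', d ∩ Y ≠ c ∩ Y := by
    intro Y hY
    rw [hNewdef, Finset.mem_filter, mem_shatteredSets] at hY
    exact missing_pattern hY.1 (fun h => hY.2 (mem_shatteredSets.2 h))
  have hiso' := (isIsometric_iff (insert c C')).1 hiso
  have hkey : ∀ Y ∈ New, ∀ x ∈ Y, c ∆ {x} ∈ C' := by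
    intro Y hYN x hxY
    have hYsh : Shatters (insert c C') Y := by
      rw [hNewdef, Finset.mem_filter, mem_shatteredSets] at hYN
      exact hYN.1
    have hpat : (c ∩ Y) ∆ {x} ∈ Y.powerset := by
      rw [Finset.mem_powerset]
      refine (symmDiff_subset_union _ _).trans ?_
      intro z hz
      rw [Finset.mem_union] at hz
      rcases hz with hz | hz
      · exact (Finset.mem_inter.1 hz).2
      · rw [Finset.mem_singleton] at hz
        exact hz ▸ hxY
    obtain ⟨d, hdCi, hd⟩ := hYsh _ hpat
    have hdc : d ≠ c := by
      rintro rfl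
      by_cases hx : x ∈ d ∩ Y
      · have h1 := card_symmDiff_singleton_mem hx
        have h2 : 0 < (d ∩ Y).card := Finset.card_pos.2 ⟨x, hx⟩
        rw [← hd] at h1
        omega
      · have h1 := card_symmDiff_singleton_not_mem hx
        rw [← hd] at h1
        omega
    have hdC' : d ∈ C' := by
      rcases Finset.mem_insert.1 hdCi with rfl | h
      · exact absurd rfl hdc
      · exact h
    have hgeo := hiso'.2 c (Finset.mem_insert_self c C') d hdCi
    obtain ⟨k, hk⟩ : ∃ k, hdist c d = k := ⟨_, rfl⟩
    rw [hk] at hgeo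
    have hk0 : k ≠ 0 := by
      intro h
      rw [h] at hk
      exact hdc (hdist_eq_zero_iff.1 hk).symm
    obtain ⟨k1, rfl⟩ : ∃ k1, k = k1 + 1 := ⟨k - 1, by omega⟩
    obtain ⟨w, h1, hp'⟩ := hgeo.decons
    have hle := hp'.hdist_le
    have htri := hdist_triangle c w d
    have hwd : hdist w d = k1 := by omega
    obtain ⟨z, hzw⟩ := hdist_one_iff.1 h1
    have hwz : w = c ∆ {z} := by
      rw [← hzw, symmDiff_cancel_left]
    have hwc : w ≠ c := by
      intro h
      rw [h, hdist_self'] at h1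
      omega
    have hwC' : w ∈ C' := by
      rcases Finset.mem_insert.1 hp'.left_mem with h | h
      · exact absurd h hwc
      · exact h
    have hzcd : z ∈ c ∆ d := by
      by_contra hz
      have := hdist_flip_of_not_mem hz
      rw [← hwz] at this
      omega
    have hzY : z ∈ Y := by
      by_contra hzY
      apply hmiss Y hYN w hwC'
      rw [hwz]
      exact flip_inter_eq hzY
    have hzx : z = x := by
      have h5 : (c ∆ d) ∩ Y = {x} := by
        rw [symmDiff_inter_distrib, hd]
        exact symmDiff_cancel_left _ _
      have : z ∈ (c ∆ d) ∩ Y := Finset.mem_inter.2 ⟨hzcd, hzY⟩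
      rw [h5, Finset.mem_singleton] at this
      exact this
    rw [← hzx, ← hwz]
    exact hwC'
  have hNew1 : New.card ≤ 1 := by
    rw [Finset.card_le_one]
    intro Y1 hY1 Y2 hY2
    by_contra hne12
    have hex : ∃ x, (x ∈ Y1 ∧ x ∉ Y2) ∨ (x ∈ Y2 ∧ x ∉ Y1) := by
      by_contra hall
      push_neg at hall
      apply hne12
      ext x
      have := hall x
      tauto
    obtain ⟨x, hx⟩ := hex
    rcases hx with ⟨hx1, hx2⟩ | ⟨hx1, hx2⟩
    · exact hmiss Y2 hY2 (c ∆ {x}) (hkey Y1 hY1 x hx1) (flip_inter_eq hx2)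
    · exact hmiss Y1 hY1 (c ∆ {x}) (hkey Y2 hY2 x hx1) (flip_inter_eq hx2)
  have hsub2 : shatteredSets (insert c C') ⊆ shatteredSets C' ∪ New := by
    intro Y hY
    by_cases h : Y ∈ shatteredSets C'
    · exact Finset.mem_union_left _ h
    · exact Finset.mem_union_right _ (Finset.mem_filter.2 ⟨hY, h⟩)
  have hle2 : (shatteredSets (insert c C')).card ≤ (shatteredSets C').card + 1 := by
    have hu := Finset.card_union_le (shatteredSets C') New
    have := Finset.card_le_card hsub2
    omega
  have hAeq : C'.card = (shatteredSets C').card := hA'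
  unfold IsAmple
  omega

/-- If `C'` and `insert c C'` are ample, `c` is a corner of `insert c C'`. -/
lemma corner_step {C' : Finset (Finset X)} {c : Finset X} (hc : c ∉ C')
    (hA' : IsAmple C') (hA : IsAmple (insert c C')) : IsCornerOf (insert c C') c := by
  classical
  have hcard : (insert c C').card = C'.card + 1 := Finset.card_insert_of_notMem hc
  have hsub : shatteredSets C' ⊆ shatteredSets (insert c C') :=
    shatteredSets_mono (Finset.subset_insert c C')
  have hlt : (shatteredSets C').card < (shatteredSets (insert c C')).card := by
    have h1 : C'.card = (shatteredSets C').card := hA'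
    have h2 : (insert c C').card = (shatteredSets (insert c C')).card := hA
    omega
  obtain ⟨Y, hYin, hYnot⟩ : ∃ Y, Y ∈ shatteredSets (insert c C') ∧ Y ∉ shatteredSets C' := by
    obtain ⟨Y, hY1, hY2⟩ := Finset.exists_of_ssubset ⟨hsub, fun h =>
      absurd (Finset.card_le_card h) (by omega)⟩
    exact ⟨Y, hY1, hY2⟩
  have hmiss := missing_pattern (mem_shatteredSets.1 hYin)
    (fun h => hYnot (mem_shatteredSets.2 h))
  have hutr : ∀ d ∈ insert c C', d ∩ Y = c ∩ Y → d = c := by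
    intro d hd heq
    rcases Finset.mem_insert.1 hd with rfl | hd'
    · rfl
    · exact absurd heq (hmiss d hd')
  obtain ⟨B, hBsub, hBcube⟩ := ample_shattered_cube hA hYin
  have hcB : c ∈ B := by
    obtain ⟨t, ht, hBeq⟩ := hBcube
    have hmem : t ∪ (c ∩ Y) ∈ B := by
      rw [hBeq, Finset.mem_image]
      exact ⟨c ∩ Y, Finset.mem_powerset.2 (Finset.inter_subset_right), rfl⟩
    have htr : (t ∪ (c ∩ Y)) ∩ Y = c ∩ Y := by
      rw [Finset.union_inter_distrib_right, ht, Finset.empty_union,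
        Finset.inter_assoc, Finset.inter_self]
    have := hutr _ (hBsub hmem) htr
    rwa [this] at hmem
  have hBeq : B = cubeAt c Y := isCubeS_eq_cubeAt hBcube hcB
  have hclaim : ∀ Q, IsCubeOf (insert c C') Q → c ∈ Q → Q ⊆ cubeAt c Y := by
    intro Q hQ hcQ
    obtain ⟨Z, hQZ⟩ := hQ.2
    have hQeq : Q = cubeAt c Z := isCubeS_eq_cubeAt hQZ hcQ
    have hZY : Z ⊆ Y := by
      intro z hz
      have hwQ : c ∆ {z} ∈ Q := by
        rw [hQeq, mem_cubeAt, symmDiff_cancel_left]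
        exact Finset.singleton_subset_iff.2 hz
      by_contra hzY
      have htr : (c ∆ {z}) ∩ Y = c ∩ Y := flip_inter_eq hzY
      have := hutr _ (hQ.1 hwQ) htr
      have h2 := congrArg (fun s => c ∆ s) this
      simp only [symmDiff_cancel_left, symmDiff_self, Finset.bot_eq_empty] at h2
      exact absurd h2 (Finset.singleton_ne_empty z)
    rw [hQeq]
    exact cubeAt_mono hZY
  have hcubeOf : IsCubeOf (insert c C') (cubeAt c Y) :=
    ⟨hBeq ▸ hBsub, ⟨Y, cubeAt_isCubeS c Y⟩⟩
  have hmax : IsMaximalCubeOf (insert c C') (cubeAt c Y) := by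
    refine ⟨hcubeOf, ?_⟩
    intro B' hB' hsubB'
    exact Finset.Subset.antisymm hsubB' (hclaim B' hB' (hsubB' (self_mem_cubeAt c Y)))
  refine ⟨Finset.mem_insert_self c C', cubeAt c Y, ⟨hmax, self_mem_cubeAt c Y⟩, ?_⟩
  rintro B' ⟨hB'max, hcB'⟩
  have hsubB' : B' ⊆ cubeAt c Y := hclaim B' hB'max.1 hcB'
  exact hB'max.2 (cubeAt c Y) hcubeOf hsubB'

end PartMainSteps
section PartList
open scoped symmDiff
variable {X : Type} [Fintype X] [DecidableEq X]

lemma take_succ_toFinset (l : List (Finset X)) (i : ℕ) (h : i < l.length) :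
    (l.take (i+1)).toFinset = insert (l.get ⟨i, h⟩) (l.take i).toFinset := by
  rw [List.take_succ]
  rw [List.getElem?_eq_getElem h]
  simp only [Option.toList_some, List.toFinset_append, List.toFinset_cons, List.toFinset_nil,
    insert_empty_eq, List.get_eq_getElem]
  rw [Finset.union_comm, ← Finset.insert_eq]

lemma get_not_mem_take (l : List (Finset X)) (hnd : l.Nodup) (i : ℕ) (h : i < l.length) :
    l.get ⟨i, h⟩ ∉ (l.take i).toFinset := by
  have hnd2 : (l.take (i+1)).Nodup := hnd.sublist (List.take_sublist _ _)
  rw [List.take_succ, List.getElem?_eq_getElem h] at hnd2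
  simp only [Option.toList_some] at hnd2
  rw [List.nodup_append] at hnd2
  intro hmem
  rw [List.mem_toFinset] at hmem
  exact hnd2.2.2 _ hmem _ (List.mem_singleton_self _) (by simp [List.get_eq_getElem])

lemma take_erase_toFinset (l : List (Finset X)) (hnd : l.Nodup) (i : ℕ) (h : i < l.length) :
    ((l.take (i+1)).toFinset).erase (l.get ⟨i, h⟩) = (l.take i).toFinset := by
  rw [take_succ_toFinset l i h, Finset.erase_insert (get_not_mem_take l hnd i h)]

lemma take_toFinset_nonempty (l : List (Finset X)) (i : ℕ) (h0 : 0 < i) (hle : i ≤ l.length) :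
    (l.take i).toFinset.Nonempty := by
  have hne : l.take i ≠ [] := by
    intro h
    have := congrArg List.length h
    rw [List.length_take] at this
    simp only [List.length_nil] at this
    omega
  exact ⟨(l.take i).head hne, List.mem_toFinset.2 (List.head_mem hne)⟩

end PartList

/-- For an ordering of an isometric concept class, the following are
equivalent: every level set is ample; every element is a corner of its level set;
every level set is isometric; every level set is weakly isometric. -/
theorem stmt_2 (C : Finset (Finset X)) (hC : IsIsometric C)
    (l : List (Finset X)) (hnd : l.Nodup) (hl : l.toFinset = C) :
    ((∀ i, 0 < i → i ≤ l.length → IsAmple (l.take i).toFinset) ↔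
      (∀ i (h : i < l.length), IsCornerOf ((l.take (i + 1)).toFinset) (l.get ⟨i, h⟩))) ∧
    ((∀ i, 0 < i → i ≤ l.length → IsAmple (l.take i).toFinset) ↔
      (∀ i, 0 < i → i ≤ l.length → IsIsometric (l.take i).toFinset)) ∧
    ((∀ i, 0 < i → i ≤ l.length → IsAmple (l.take i).toFinset) ↔
      (∀ i, 0 < i → i ≤ l.length → IsWeaklyIsometric (l.take i).toFinset)) := by
  classical
  have htop : (l.take l.length).toFinset = C := by rw [List.take_length, hl]
  have hIW : (∀ i, 0 < i → i ≤ l.length → IsIsometric (l.take i).toFinset) →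
      (∀ i, 0 < i → i ≤ l.length → IsWeaklyIsometric (l.take i).toFinset) := by
    intro h i h0 hle
    obtain ⟨h1, h2⟩ := h i h0 hle
    exact ⟨h1, fun u v _ => h2 u v⟩
  have hWI : (∀ i, 0 < i → i ≤ l.length → IsWeaklyIsometric (l.take i).toFinset) →
      (∀ i, 0 < i → i ≤ l.length → IsIsometric (l.take i).toFinset) := by
    intro hW
    have aux : ∀ d i, i + d = l.length → 0 < i → IsIsometric (l.take i).toFinset := by
      intro d
      induction d with
      | zero =>
        intro i hi h0
        have : i = l.length := by omega
        subst this
        rw [htop]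
        exact hC
      | succ d ih =>
        intro i hi h0
        have hlt : i < l.length := by omega
        have hprev := ih (i + 1) (by omega) (by omega)
        have hW' := hW i h0 (by omega)
        rw [← take_erase_toFinset l hnd i hlt] at hW'
        have := iso_erase_of_weak hprev hW'
        rwa [take_erase_toFinset l hnd i hlt] at this
    intro i h0 hle
    exact aux (l.length - i) i (by omega) h0
  have hBI : (∀ i (h : i < l.length), IsCornerOf ((l.take (i + 1)).toFinset) (l.get ⟨i, h⟩)) →
      (∀ i, 0 < i → i ≤ l.length → IsIsometric (l.take i).toFinset) := by
    intro hB
    have aux : ∀ d i, i + d = l.length → 0 < i → IsIsometric (l.take i).toFinset := by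
      intro d
      induction d with
      | zero =>
        intro i hi h0
        have : i = l.length := by omega
        subst this
        rw [htop]
        exact hC
      | succ d ih =>
        intro i hi h0
        have hlt : i < l.length := by omega
        have hprev := ih (i + 1) (by omega) (by omega)
        have hneE : (((l.take (i + 1)).toFinset).erase (l.get ⟨i, hlt⟩)).Nonempty := by
          rw [take_erase_toFinset l hnd i hlt]
          exact take_toFinset_nonempty l i h0 (by omega)
        have := iso_erase_of_corner hprev (hB i hlt) hneE
        rwa [take_erase_toFinset l hnd i hlt] at this
    intro i h0 hle
    exact aux (l.length - i) i (by omega) h0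
  have hIA : (∀ i, 0 < i → i ≤ l.length → IsIsometric (l.take i).toFinset) →
      (∀ i, 0 < i → i ≤ l.length → IsAmple (l.take i).toFinset) := by
    intro hI i
    induction i with
    | zero => intro h0; exact absurd h0 (by omega)
    | succ n ih =>
      intro h0 hle
      have hlt : n < l.length := by omega
      rcases Nat.eq_zero_or_pos n with rfl | hn
      · rw [take_succ_toFinset l 0 hlt]
        have h00 : (l.take 0).toFinset = ∅ := by simp
        rw [h00]
        have := ample_singleton (X := X) (l.get ⟨0, hlt⟩)
        simpa using this
      · have hAprev := ih hn (by omega)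
        have hIi := hI (n + 1) (by omega) hle
        rw [take_succ_toFinset l n hlt] at hIi ⊢
        exact ample_step (get_not_mem_take l hnd n hlt) hAprev hIi
  have hAB : (∀ i, 0 < i → i ≤ l.length → IsAmple (l.take i).toFinset) →
      (∀ i (h : i < l.length), IsCornerOf ((l.take (i + 1)).toFinset) (l.get ⟨i, h⟩)) := by
    intro hAmp i h
    have hAi : IsAmple (l.take i).toFinset := by
      rcases Nat.eq_zero_or_pos i with rfl | h0
      · have h00 : (l.take 0).toFinset = (∅ : Finset (Finset X)) := by simp
        rw [h00]
        exact ample_empty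
      · exact hAmp i h0 (by omega)
    have hAsucc := hAmp (i + 1) (by omega) (by omega)
    rw [take_succ_toFinset l i h] at hAsucc ⊢
    exact corner_step (get_not_mem_take l hnd i h) hAi hAsucc
  exact ⟨⟨hAB, fun hB => hIA (hBI hB)⟩, ⟨fun hA => hBI (hAB hA), hIA⟩,
    ⟨fun hA => hIW (hBI (hAB hA)), fun hW => hIA (hWI hW)⟩⟩
end

section
/- Let C be an ample concept class over X and let t ⊆ X with t ∉ C. Let F[t] be the smallest cube of 2^X containing t and all concepts of C at Hamming distance 1 from t. Then F[t] ⊆ C ∪ {t}. -/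
variable {X : Type} [Fintype X] [DecidableEq X]

set_option linter.unusedSectionVars false
namespace Stmt3Aux

open Finset

variable {X : Type} [Fintype X] [DecidableEq X]

/-! ### symmetric difference helpers -/

lemma sd_cancel (a b : Finset X) : symmDiff a (symmDiff a b) = b := by
  ext x; simp [Finset.mem_symmDiff]; try tauto

lemma sd_eq_empty {a b : Finset X} (h : symmDiff a b = ∅) : a = b := by
  ext x
  have := Finset.ext_iff.1 h x
  simp [Finset.mem_symmDiff] at this
  tauto

lemma sd_eq_union (a b : Finset X) : symmDiff a b = (a \ b) ∪ (b \ a) := by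
  rw [symmDiff_def, Finset.sup_eq_union]

lemma sd_inter (s c Y : Finset X) :
    (symmDiff s c) ∩ Y = symmDiff (s ∩ Y) (c ∩ Y) := by
  ext x; simp [Finset.mem_symmDiff]; try tauto

/-! ### shattering basics -/

lemma shatters_iff {C : Finset (Finset X)} {Y : Finset X} :
    _root_.Shatters C Y ↔ ∀ s ⊆ Y, ∃ c ∈ C, c ∩ Y = s := by
  simp [_root_.Shatters, Finset.mem_powerset]

/-- shattered sets with ground set `E`. -/
def shE (E : Finset X) (C : Finset (Finset X)) : Finset (Finset X) :=
  E.powerset.filter (_root_.Shatters C)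

lemma mem_shE {E Y : Finset X} {C : Finset (Finset X)} :
    Y ∈ shE E C ↔ Y ⊆ E ∧ _root_.Shatters C Y := by
  simp [shE, Finset.mem_powerset]

lemma shatters_mono {C C' : Finset (Finset X)} {Y : Finset X} (h : C ⊆ C')
    (hs : _root_.Shatters C Y) : _root_.Shatters C' Y := by
  intro s hsY
  obtain ⟨c, hc, hceq⟩ := hs s hsY
  exact ⟨c, h hc, hceq⟩

lemma shE_mono {E : Finset X} {C C' : Finset (Finset X)} (h : C ⊆ C') :
    shE E C ⊆ shE E C' := by
  intro Y hY
  rw [mem_shE] at hY ⊢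
  exact ⟨hY.1, shatters_mono h hY.2⟩

lemma empty_mem_shE {E : Finset X} {C : Finset (Finset X)} (h : C.Nonempty) :
    ∅ ∈ shE E C := by
  rw [mem_shE]
  refine ⟨empty_subset _, ?_⟩
  intro s hs
  rw [Finset.mem_powerset, Finset.subset_empty] at hs
  exact ⟨h.choose, h.choose_spec, by simp [hs]⟩

/-- `C` is ample with ground set `E`. -/
def AmpleOn (E : Finset X) (C : Finset (Finset X)) : Prop :=
  (∀ c ∈ C, c ⊆ E) ∧ C.card = (shE E C).card

/-! ### counting -/

lemma card_restrict_add_reduction (C : Finset (Finset X)) (z : X) :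
    (restrictX C z).card + (reduction C z).card = C.card := by
  classical
  set C0 := C.filter (fun c => z ∉ c) with hC0
  set C1 := C.filter (fun c => z ∈ c) with hC1
  have hsplit : C1.card + C0.card = C.card := by
    rw [hC0, hC1]
    have := Finset.card_filter_add_card_filter_not (s := C) (p := fun c => z ∈ c)
    simpa using this
  have hres : restrictX C z = C0 ∪ C1.image (fun c => c.erase z) := by
    ext c
    simp only [restrictX, mem_image, mem_union, hC0, hC1, mem_filter]
    constructor
    · rintro ⟨a, ha, rfl⟩
      by_cases hza : z ∈ a
      · exact Or.inr ⟨a, ⟨ha, hza⟩, rfl⟩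
      · exact Or.inl ⟨by rwa [erase_eq_of_notMem hza], by simp⟩
    · rintro (⟨hc, hzc⟩ | ⟨a, ⟨ha, hza⟩, rfl⟩)
      · exact ⟨c, hc, erase_eq_of_notMem hzc⟩
      · exact ⟨a, ha, rfl⟩
  have himg : (C1.image (fun c => c.erase z)).card = C1.card := by
    apply card_image_of_injOn
    intro a ha b hb hab
    simp only [hC1, coe_filter, Set.mem_setOf_eq] at ha hb
    rw [← insert_erase ha.2, ← insert_erase hb.2]
    simp only at hab
    rw [hab]
  have hinter : C0 ∩ C1.image (fun c => c.erase z) = reduction C z := by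
    ext c
    simp only [reduction, mem_inter, mem_filter, hC0, hC1, mem_image]
    constructor
    · rintro ⟨⟨hc, hzc⟩, a, ⟨ha, hza⟩, rfl⟩
      refine ⟨hc, hzc, ?_⟩
      rwa [insert_erase hza]
    · rintro ⟨hc, hzc, hic⟩
      exact ⟨⟨hc, hzc⟩, insert z c, ⟨hic, mem_insert_self _ _⟩, by rw [erase_insert hzc]⟩
  have := Finset.card_union_add_card_inter C0 (C1.image (fun c => c.erase z))
  rw [hinter, himg] at this
  rw [hres]
  omega

lemma restrictX_bound {E : Finset X} {C : Finset (Finset X)}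
    (hb : ∀ c ∈ C, c ⊆ E) (z : X) : ∀ c ∈ restrictX C z, c ⊆ E.erase z := by
  intro c hc
  obtain ⟨a, ha, rfl⟩ := mem_image.1 hc
  intro x hx
  rw [mem_erase] at hx ⊢
  exact ⟨hx.1, hb a ha hx.2⟩

lemma reduction_bound {E : Finset X} {C : Finset (Finset X)}
    (hb : ∀ c ∈ C, c ⊆ E) (z : X) : ∀ c ∈ reduction C z, c ⊆ E.erase z := by
  intro c hc
  rw [reduction, mem_filter] at hc
  intro x hx
  rw [mem_erase]
  exact ⟨fun hxz => hc.2.1 (hxz ▸ hx), hb c hc.1 hx⟩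

/-! ### lifting shattering -/

lemma sh_restrict_lift {C : Finset (Finset X)} {Y : Finset X} {z : X} (hz : z ∉ Y)
    (h : _root_.Shatters (restrictX C z) Y) : _root_.Shatters C Y := by
  rw [shatters_iff] at h ⊢
  intro s hs
  obtain ⟨c, hc, hceq⟩ := h s hs
  obtain ⟨a, ha, rfl⟩ := mem_image.1 hc
  refine ⟨a, ha, ?_⟩
  rw [← hceq]
  ext x
  simp only [mem_inter, mem_erase]
  constructor
  · intro hx; exact ⟨⟨fun hxz => hz (hxz ▸ hx.2), hx.1⟩, hx.2⟩
  · intro hx; exact ⟨hx.1.2, hx.2⟩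

lemma sh_reduction_lift {C : Finset (Finset X)} {Y : Finset X} {z : X} (hz : z ∉ Y)
    (h : _root_.Shatters (reduction C z) Y) : _root_.Shatters C (insert z Y) := by
  rw [shatters_iff] at h ⊢
  intro s hs
  have hsY : s.erase z ⊆ Y := by
    intro x hx
    rw [mem_erase] at hx
    rcases mem_insert.1 (hs hx.2) with h1 | h1
    · exact absurd h1 hx.1
    · exact h1
  obtain ⟨c, hc, hceq⟩ := h (s.erase z) hsY
  rw [reduction, mem_filter] at hc
  obtain ⟨hcC, hzc, hic⟩ := hc
  by_cases hzs : z ∈ s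
  · refine ⟨insert z c, hic, ?_⟩
    ext x
    by_cases hxz : x = z
    · subst hxz; simp [hzs]
    · have h1 : (x ∈ c ∧ x ∈ Y) ↔ (x ≠ z ∧ x ∈ s) := by
        rw [← mem_erase, ← hceq]; simp [mem_inter]
      have hsx : x ∈ s → x ∈ Y := fun h => hsY (mem_erase.2 ⟨hxz, h⟩)
      simp only [mem_inter, mem_insert]
      tauto
  · have hse : s.erase z = s := erase_eq_of_notMem hzs
    refine ⟨c, hcC, ?_⟩
    ext x
    by_cases hxz : x = z
    · subst hxz; simp [hzc, hzs]
    · have h1 : (x ∈ c ∧ x ∈ Y) ↔ (x ≠ z ∧ x ∈ s) := by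
        rw [← mem_erase, hse, ← hse, ← hceq]; simp [mem_inter]
      have hsx : x ∈ s → x ∈ Y := fun h => hsY (mem_erase.2 ⟨hxz, h⟩)
      simp only [mem_inter, mem_insert]
      tauto

/-! ### Sauer -/

lemma sauer_zero_aux (C : Finset (Finset X)) (hb : ∀ c ∈ C, c ⊆ (∅ : Finset X)) :
    C.card ≤ (shE (∅ : Finset X) C).card := by
  rcases C.eq_empty_or_nonempty with rfl | hne
  · simp
  · have hC : C = {∅} := by
      apply subset_antisymm
      · intro c hc
        rw [mem_singleton, ← subset_empty]
        exact hb c hc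
      · rw [singleton_subset_iff]
        obtain ⟨c, hc⟩ := hne
        have : c = ∅ := subset_empty.1 (hb c hc)
        rwa [this] at hc
    rw [hC]
    simp only [card_singleton]
    exact card_pos.2 ⟨∅, empty_mem_shE ⟨∅, mem_singleton_self ∅⟩⟩

lemma shE_pieces_subset {E : Finset X} {C : Finset (Finset X)} {z : X} (hz : z ∈ E) :
    shE (E.erase z) (restrictX C z) ∪
      (shE (E.erase z) (reduction C z)).image (insert z) ⊆ shE E C := by
  intro Y hY
  rcases mem_union.1 hY with h | h
  · rw [mem_shE] at h ⊢
    refine ⟨h.1.trans (erase_subset _ _), ?_⟩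
    exact sh_restrict_lift (fun hzY => (mem_erase.1 (h.1 hzY)).1 rfl) h.2
  · obtain ⟨Y0, hY0, rfl⟩ := mem_image.1 h
    rw [mem_shE] at hY0 ⊢
    have hzY0 : z ∉ Y0 := fun hzY => (mem_erase.1 (hY0.1 hzY)).1 rfl
    constructor
    · intro x hx
      rcases mem_insert.1 hx with rfl | hx
      · exact hz
      · exact erase_subset _ _ (hY0.1 hx)
    · exact sh_reduction_lift hzY0 hY0.2

lemma shE_pieces_disj {E : Finset X} {C : Finset (Finset X)} {z : X} :
    Disjoint (shE (E.erase z) (restrictX C z))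
      ((shE (E.erase z) (reduction C z)).image (insert z)) := by
  rw [Finset.disjoint_left]
  intro Y hY hY'
  obtain ⟨Y0, _, rfl⟩ := mem_image.1 hY'
  have := (mem_shE.1 hY).1 (mem_insert_self z Y0)
  exact (mem_erase.1 this).1 rfl

lemma shE_pieces_card {E : Finset X} {C : Finset (Finset X)} {z : X} :
    ((shE (E.erase z) (reduction C z)).image (insert z)).card
      = (shE (E.erase z) (reduction C z)).card := by
  apply card_image_of_injOn
  intro a ha b hb hab
  have hza : z ∉ a := fun h => (mem_erase.1 ((mem_shE.1 (by simpa using ha)).1 h)).1 rfl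
  have hzb : z ∉ b := fun h => (mem_erase.1 ((mem_shE.1 (by simpa using hb)).1 h)).1 rfl
  rw [← erase_insert hza, ← erase_insert hzb, hab]

lemma sauer : ∀ (n : ℕ) (E : Finset X) (C : Finset (Finset X)), E.card ≤ n →
    (∀ c ∈ C, c ⊆ E) → C.card ≤ (shE E C).card := by
  intro n
  induction n with
  | zero =>
    intro E C hE hb
    have hE0 : E = ∅ := card_eq_zero.1 (Nat.le_zero.1 hE)
    subst hE0
    exact sauer_zero_aux C hb
  | succ n ih =>
    intro E C hE hb
    rcases E.eq_empty_or_nonempty with rfl | ⟨z, hz⟩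
    · exact sauer_zero_aux C hb
    · have hE' : (E.erase z).card ≤ n := by
        rw [card_erase_of_mem hz]
        omega
      have h1 := ih (E.erase z) (restrictX C z) hE' (restrictX_bound hb z)
      have h2 := ih (E.erase z) (reduction C z) hE' (reduction_bound hb z)
      calc C.card = (restrictX C z).card + (reduction C z).card :=
            (card_restrict_add_reduction C z).symm
        _ ≤ (shE (E.erase z) (restrictX C z)).card
            + (shE (E.erase z) (reduction C z)).card := by omega
        _ = (shE (E.erase z) (restrictX C z)
            ∪ (shE (E.erase z) (reduction C z)).image (insert z)).card := by
            rw [card_union_of_disjoint shE_pieces_disj, shE_pieces_card]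
        _ ≤ (shE E C).card := card_le_card (shE_pieces_subset hz)

/-- descent of ampleness plus the decomposition of the shattered sets. -/
lemma ample_star {E : Finset X} {C : Finset (Finset X)} {z : X}
    (h : AmpleOn E C) (hz : z ∈ E) :
    AmpleOn (E.erase z) (restrictX C z) ∧ AmpleOn (E.erase z) (reduction C z) ∧
      shE E C = shE (E.erase z) (restrictX C z) ∪
        (shE (E.erase z) (reduction C z)).image (insert z) := by
  obtain ⟨hb, hcard⟩ := h
  have hbR := restrictX_bound hb z
  have hbQ := reduction_bound hb z
  have h1 : (restrictX C z).card ≤ (shE (E.erase z) (restrictX C z)).card :=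
    sauer _ _ _ le_rfl hbR
  have h2 : (reduction C z).card ≤ (shE (E.erase z) (reduction C z)).card :=
    sauer _ _ _ le_rfl hbQ
  have hcnt := card_restrict_add_reduction C z
  have hucard : (shE (E.erase z) (restrictX C z)
      ∪ (shE (E.erase z) (reduction C z)).image (insert z)).card
      = (shE (E.erase z) (restrictX C z)).card
        + (shE (E.erase z) (reduction C z)).card := by
    rw [card_union_of_disjoint shE_pieces_disj, shE_pieces_card]
  have hle := card_le_card (shE_pieces_subset (C := C) hz)
  rw [hucard] at hle
  have heq1 : (restrictX C z).card = (shE (E.erase z) (restrictX C z)).card := by omega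
  have heq2 : (reduction C z).card = (shE (E.erase z) (reduction C z)).card := by omega
  refine ⟨⟨hbR, heq1⟩, ⟨hbQ, heq2⟩, ?_⟩
  apply (eq_of_subset_of_card_le (shE_pieces_subset hz) _).symm
  rw [hucard]
  omega

/-- key consequence of `ample_star`. -/
lemma sh_erase_reduction {E : Finset X} {C : Finset (Finset X)} {z : X} {Y : Finset X}
    (h : AmpleOn E C) (hz : z ∈ E) (hzY : z ∉ Y) (hY : insert z Y ∈ shE E C) :
    Y ∈ shE (E.erase z) (reduction C z) := by
  obtain ⟨-, -, hdec⟩ := ample_star h hz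
  rw [hdec] at hY
  rcases mem_union.1 hY with h1 | h1
  · have := (mem_shE.1 h1).1 (mem_insert_self z Y)
    exact absurd rfl (mem_erase.1 this).1
  · obtain ⟨Y0, hY0, heq⟩ := mem_image.1 h1
    have hzY0 : z ∉ Y0 := fun hh => (mem_erase.1 ((mem_shE.1 hY0).1 hh)).1 rfl
    have : Y0 = Y := by
      rw [← erase_insert hzY0, heq, erase_insert hzY]
    rwa [this] at hY0

/-! ### shattered implies strongly shattered -/

lemma sh_st : ∀ (n : ℕ) (E : Finset X) (C : Finset (Finset X)) (Y : Finset X),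
    E.card ≤ n → AmpleOn E C → Y ∈ shE E C →
    ∃ w, w ⊆ E ∧ w ∩ Y = ∅ ∧ ∀ s ⊆ Y, w ∪ s ∈ C := by
  intro n
  induction n with
  | zero =>
    intro E C Y hE h hY
    have hY0 : Y = ∅ := subset_empty.1 ((mem_shE.1 hY).1.trans
      (card_eq_zero.1 (Nat.le_zero.1 hE) ▸ subset_refl _))
    subst hY0
    obtain ⟨c, hc, -⟩ := (mem_shE.1 hY).2 ∅ (by simp)
    exact ⟨c, h.1 c hc, inter_empty c, fun s hs => by
      rw [subset_empty.1 hs, union_empty]; exact hc⟩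
  | succ n ih =>
    intro E C Y hE h hY
    rcases Y.eq_empty_or_nonempty with rfl | ⟨z, hzY⟩
    · obtain ⟨c, hc, -⟩ := (mem_shE.1 hY).2 ∅ (by simp)
      exact ⟨c, h.1 c hc, inter_empty c, fun s hs => by
        rw [subset_empty.1 hs, union_empty]; exact hc⟩
    · have hzE : z ∈ E := (mem_shE.1 hY).1 hzY
      have hE' : (E.erase z).card ≤ n := by rw [card_erase_of_mem hzE]; omega
      have hampQ := (ample_star h hzE).2.1
      have hYz : insert z (Y.erase z) = Y := insert_erase hzY
      have hY' : Y.erase z ∈ shE (E.erase z) (reduction C z) := by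
        apply sh_erase_reduction h hzE (notMem_erase z Y)
        rwa [hYz]
      obtain ⟨w, hwE, hwY, hcube⟩ := ih (E.erase z) (reduction C z) (Y.erase z) hE' hampQ hY'
      have hzw : z ∉ w := fun hh => (mem_erase.1 (hwE hh)).1 rfl
      refine ⟨w, hwE.trans (erase_subset _ _), ?_, ?_⟩
      · ext x
        simp only [mem_inter, notMem_empty, iff_false, not_and]
        intro hxw hxY
        have hxz : x ≠ z := fun hh => hzw (hh ▸ hxw)
        have : x ∈ w ∩ Y.erase z := mem_inter.2 ⟨hxw, mem_erase.2 ⟨hxz, hxY⟩⟩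
        rw [hwY] at this
        exact notMem_empty x this
      · intro s hs
        have hs' : s.erase z ⊆ Y.erase z := erase_subset_erase z hs
        have hmem := hcube (s.erase z) hs'
        rw [reduction, mem_filter] at hmem
        by_cases hzs : z ∈ s
        · have : w ∪ s = insert z (w ∪ s.erase z) := by
            rw [← union_insert, insert_erase hzs]
          rw [this]
          exact hmem.2.2
        · rw [erase_eq_of_notMem hzs] at hmem
          exact hmem.1

/-! ### complement -/

lemma compl_ample {E : Finset X} {C : Finset (Finset X)} (h : AmpleOn E C) :
    AmpleOn E (E.powerset \ C) := by
  have hCP : C ⊆ E.powerset := fun c hc => mem_powerset.2 (h.1 c hc)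
  have hbD : ∀ c ∈ E.powerset \ C, c ⊆ E := fun c hc =>
    mem_powerset.1 (mem_sdiff.1 hc).1
  refine ⟨hbD, ?_⟩
  have hkey : ∀ Y ∈ shE E C, E \ Y ∉ shE E (E.powerset \ C) := by
    intro Y hY hmem
    obtain ⟨w, hwE, hwY, hcube⟩ := sh_st E.card E C Y le_rfl h hY
    have hwsub : w ⊆ E \ Y := by
      intro x hx
      rw [mem_sdiff]
      refine ⟨hwE hx, fun hxY => ?_⟩
      have : x ∈ w ∩ Y := mem_inter.2 ⟨hx, hxY⟩
      rw [hwY] at this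
      exact notMem_empty x this
    obtain ⟨d, hdD, hdeq⟩ := shatters_iff.1 (mem_shE.1 hmem).2 w hwsub
    obtain ⟨hdP, hdC⟩ := mem_sdiff.1 hdD
    apply hdC
    have hd : d = w ∪ (d ∩ Y) := by
      ext x
      simp only [mem_union, mem_inter]
      constructor
      · intro hx
        by_cases hxY : x ∈ Y
        · exact Or.inr ⟨hx, hxY⟩
        · have : x ∈ d ∩ (E \ Y) := mem_inter.2 ⟨hx, mem_sdiff.2 ⟨mem_powerset.1 hdP hx, hxY⟩⟩
          rw [hdeq] at this
          exact Or.inl this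
      · rintro (hx | ⟨hx, -⟩)
        · have := hwsub hx
          have h2 : x ∈ d ∩ (E \ Y) := by rw [hdeq]; exact hx
          exact (mem_inter.1 h2).1
        · exact hx
    rw [hd]
    exact hcube (d ∩ Y) inter_subset_right
  have hinj : ((shE E C).image (fun Y => E \ Y)).card = (shE E C).card := by
    apply card_image_of_injOn
    intro a ha b hb hab
    have ha' : a ⊆ E := (mem_shE.1 (by simpa using ha)).1
    have hb' : b ⊆ E := (mem_shE.1 (by simpa using hb)).1
    simp only at hab
    have h2 : E \ (E \ a) = E \ (E \ b) := by rw [hab]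
    rw [sdiff_sdiff_right_self, sdiff_sdiff_right_self] at h2
    have h3 : E ∩ a = E ∩ b := h2
    rwa [inter_eq_right.2 ha', inter_eq_right.2 hb'] at h3
  have hsub2 : (shE E C).image (fun Y => E \ Y) ⊆ E.powerset \ shE E (E.powerset \ C) := by
    intro Z hZ
    obtain ⟨Y, hY, rfl⟩ := mem_image.1 hZ
    exact mem_sdiff.2 ⟨mem_powerset.2 sdiff_subset, hkey Y hY⟩
  have hDsub : shE E (E.powerset \ C) ⊆ E.powerset := fun Y hY =>
    mem_powerset.2 (mem_shE.1 hY).1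
  have h5 := card_le_card hsub2
  rw [hinj] at h5
  have h6 := Finset.card_sdiff_add_card_eq_card hDsub
  have h7 := Finset.card_sdiff_add_card_eq_card hCP
  have h8 : (E.powerset \ C).card ≤ (shE E (E.powerset \ C)).card :=
    sauer E.card E _ le_rfl hbD
  have h9 := h.2
  omega

/-! ### halves and faces -/

lemma half_ample {E : Finset X} {C : Finset (Finset X)} {z : X}
    (h : AmpleOn E C) (hz : z ∈ E) :
    AmpleOn (E.erase z) (C.filter (fun c => z ∉ c)) := by
  classical
  obtain ⟨hampR, hampQ, hdec⟩ := ample_star h hz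
  set E' := E.erase z with hE'
  set C0 := C.filter (fun c => z ∉ c) with hC0
  set C1 := (C.filter (fun c => z ∈ c)).image (fun c => c.erase z) with hC1
  have hb0 : ∀ c ∈ C0, c ⊆ E' := by
    intro c hc
    rw [hC0, mem_filter] at hc
    intro x hx
    rw [hE', mem_erase]
    exact ⟨fun hh => hc.2 (hh ▸ hx), h.1 c hc.1 hx⟩
  have hb1 : ∀ c ∈ C1, c ⊆ E' := by
    intro c hc
    obtain ⟨a, ha, rfl⟩ := mem_image.1 hc
    rw [mem_filter] at ha
    intro x hx
    rw [mem_erase] at hx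
    rw [hE', mem_erase]
    exact ⟨hx.1, h.1 a ha.1 hx.2⟩
  have hcards : C0.card + C1.card = C.card := by
    have himg : C1.card = (C.filter (fun c => z ∈ c)).card := by
      rw [hC1]
      apply card_image_of_injOn
      intro a ha b hb hab
      simp only [coe_filter, Set.mem_setOf_eq] at ha hb
      simp only at hab
      rw [← insert_erase ha.2, ← insert_erase hb.2, hab]
    rw [himg, hC0]
    have := Finset.card_filter_add_card_filter_not (s := C) (p := fun c => z ∈ c)
    omega
  have hsub0 : C0 ⊆ restrictX C z := by
    intro c hc
    rw [hC0, mem_filter] at hc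
    exact mem_image.2 ⟨c, hc.1, erase_eq_of_notMem hc.2⟩
  have hsub1 : C1 ⊆ restrictX C z := by
    intro c hc
    obtain ⟨a, ha, rfl⟩ := mem_image.1 hc
    exact mem_image.2 ⟨a, (mem_filter.1 ha).1, rfl⟩
  have hunion : shE E' C0 ∪ shE E' C1 ⊆ shE E' (restrictX C z) :=
    union_subset (shE_mono hsub0) (shE_mono hsub1)
  have hinter : shE E' C0 ∩ shE E' C1 ⊆ shE E' (reduction C z) := by
    intro Y hY
    obtain ⟨hY0, hY1⟩ := mem_inter.1 hY
    have hYE' : Y ⊆ E' := (mem_shE.1 hY0).1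
    have hzY : z ∉ Y := fun hh => (mem_erase.1 (hYE' hh)).1 rfl
    apply sh_erase_reduction h hz hzY
    rw [mem_shE]
    constructor
    · intro x hx
      rcases mem_insert.1 hx with rfl | hx
      · exact hz
      · exact (erase_subset _ _) (hYE' hx)
    · rw [shatters_iff]
      intro s hs
      by_cases hzs : z ∈ s
      · have hs' : s.erase z ⊆ Y := by
          intro x hx
          rw [mem_erase] at hx
          rcases mem_insert.1 (hs hx.2) with h1 | h1
          · exact absurd h1 hx.1
          · exact h1
        obtain ⟨c, hc, hceq⟩ := shatters_iff.1 (mem_shE.1 hY1).2 (s.erase z) hs'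
        obtain ⟨a, ha, rfl⟩ := mem_image.1 hc
        rw [mem_filter] at ha
        refine ⟨a, ha.1, ?_⟩
        ext x
        by_cases hxz : x = z
        · subst hxz; simp [ha.2, hzs]
        · have h1 : (x ∈ a ∧ x ∈ Y) ↔ x ∈ s := by
            constructor
            · intro hx
              have h2 : x ∈ a.erase z ∩ Y := mem_inter.2 ⟨mem_erase.2 ⟨hxz, hx.1⟩, hx.2⟩
              rw [hceq] at h2
              exact mem_of_mem_erase h2
            · intro hx
              have h2 : x ∈ s.erase z := mem_erase.2 ⟨hxz, hx⟩
              rw [← hceq] at h2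
              obtain ⟨h3, h4⟩ := mem_inter.1 h2
              exact ⟨mem_of_mem_erase h3, h4⟩
          simp only [mem_inter, mem_insert]
          tauto
      · have hs' : s ⊆ Y := by
          intro x hx
          rcases mem_insert.1 (hs hx) with h1 | h1
          · exact absurd (h1 ▸ hx) hzs
          · exact h1
        obtain ⟨c, hc, hceq⟩ := shatters_iff.1 (mem_shE.1 hY0).2 s hs'
        rw [hC0, mem_filter] at hc
        refine ⟨c, hc.1, ?_⟩
        rw [← hceq]
        ext x
        simp only [mem_inter, mem_insert]
        constructor
        · rintro ⟨h1, h2 | h2⟩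
          · exact absurd (h2 ▸ h1) hc.2
          · exact ⟨h1, h2⟩
        · rintro ⟨h1, h2⟩
          exact ⟨h1, Or.inr h2⟩
  have hcu := Finset.card_union_add_card_inter (shE E' C0) (shE E' C1)
  have hle1 := card_le_card hunion
  have hle2 := card_le_card hinter
  have hs0 := sauer E'.card E' C0 le_rfl hb0
  have hs1 := sauer E'.card E' C1 le_rfl hb1
  have hR := hampR.2
  have hQ := hampQ.2
  have hcnt := card_restrict_add_reduction C z
  have hCc := h.2
  refine ⟨hb0, ?_⟩
  omega

lemma face_ample : ∀ (n : ℕ) (E : Finset X) (C : Finset (Finset X)) (Y : Finset X),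
    E.card ≤ n → AmpleOn E C → Y ⊆ E →
    AmpleOn Y (C.filter (fun c => c ⊆ Y)) := by
  intro n
  induction n with
  | zero =>
    intro E C Y hE h hYE
    have hE0 : E = ∅ := card_eq_zero.1 (Nat.le_zero.1 hE)
    subst hE0
    have hY0 : Y = ∅ := subset_empty.1 hYE
    subst hY0
    have : C.filter (fun c => c ⊆ (∅ : Finset X)) = C :=
      filter_true_of_mem (fun c hc => h.1 c hc)
    rwa [this]
  | succ n ih =>
    intro E C Y hE h hYE
    by_cases hEY : Y = E
    · subst hEY
      have : C.filter (fun c => c ⊆ Y) = C :=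
        filter_true_of_mem (fun c hc => h.1 c hc)
      rwa [this]
    · obtain ⟨z, hzE, hzY⟩ : ∃ z ∈ E, z ∉ Y := by
        by_contra hcon
        push_neg at hcon
        exact hEY (subset_antisymm hYE hcon)
      have hhalf := half_ample h hzE
      have hE' : (E.erase z).card ≤ n := by rw [card_erase_of_mem hzE]; omega
      have hYE' : Y ⊆ E.erase z := subset_erase.2 ⟨hYE, hzY⟩
      have := ih (E.erase z) (C.filter (fun c => z ∉ c)) Y hE' hhalf hYE'
      have heq : (C.filter (fun c => z ∉ c)).filter (fun c => c ⊆ Y)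
          = C.filter (fun c => c ⊆ Y) := by
        rw [filter_filter]
        apply filter_congr
        intro c hc
        simp only [and_iff_right_iff_imp]
        intro hcY hzc
        exact hzY (hcY hzc)
      rwa [heq] at this

/-! ### existence of singletons -/

lemma exists_singleton : ∀ (n : ℕ) (E : Finset X) (C : Finset (Finset X)),
    E.card ≤ n → AmpleOn E C → ∅ ∈ C → E ∈ C → E.Nonempty →
    ∃ x ∈ E, ({x} : Finset X) ∈ C := by
  intro n
  induction n with
  | zero =>
    intro E C hE h h0 hEC hne
    rw [← card_pos] at hne
    omega
  | succ n ih =>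
    intro E C hE h h0 hEC hne
    by_cases hcard1 : E.card = 1
    · obtain ⟨x, rfl⟩ := card_eq_one.1 hcard1
      exact ⟨x, mem_singleton_self x, hEC⟩
    · by_cases hex : ∃ c ∈ C, c ≠ ∅ ∧ c ≠ E
      · obtain ⟨c, hcC, hc0, hcE⟩ := hex
        have hcsub : c ⊆ E := h.1 c hcC
        have hface := face_ample E.card E C c le_rfl h hcsub
        have hclt : c.card < E.card := card_lt_card (ssubset_of_subset_of_ne hcsub hcE)
        obtain ⟨x, hxc, hxF⟩ := ih c (C.filter (fun d => d ⊆ c)) (by omega) hface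
          (mem_filter.2 ⟨h0, empty_subset c⟩) (mem_filter.2 ⟨hcC, subset_refl c⟩)
          (nonempty_iff_ne_empty.2 hc0)
        exact ⟨x, hcsub hxc, (mem_filter.1 hxF).1⟩
      · exfalso
        push_neg at hex
        have hC2 : C = {∅, E} := by
          apply subset_antisymm
          · intro c hc
            rcases eq_or_ne c ∅ with rfl | hc0
            · simp
            · rw [hex c hc (nonempty_iff_ne_empty.2 hc0)]
              simp
          · intro c hc
            rcases mem_insert.1 hc with rfl | hc
            · exact h0
            · rwa [mem_singleton.1 hc]
        have hne' : (∅ : Finset X) ≠ E := fun hh => by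
          rw [← hh] at hne
          exact not_nonempty_empty hne
        have hcC : C.card = 2 := by rw [hC2, card_insert_of_notMem (by simpa using hne'), card_singleton]
        have h2 : 1 < E.card := by
          have := card_pos.2 hne
          omega
        obtain ⟨x, hx, y, hy, hxy⟩ := one_lt_card.1 h2
        have hshsub : ({∅, {x}, {y}} : Finset (Finset X)) ⊆ shE E C := by
          intro Z hZ
          have hsingle : ∀ w ∈ E, ({w} : Finset X) ∈ shE E C := by
            intro w hw
            rw [mem_shE]
            refine ⟨singleton_subset_iff.2 hw, shatters_iff.2 ?_⟩
            intro s hs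
            rcases subset_singleton_iff.1 hs with rfl | rfl
            · exact ⟨∅, h0, empty_inter _⟩
            · exact ⟨E, hEC, inter_eq_right.2 (singleton_subset_iff.2 hw)⟩
          rcases mem_insert.1 hZ with rfl | hZ
          · exact empty_mem_shE ⟨∅, h0⟩
          rcases mem_insert.1 hZ with rfl | hZ
          · exact hsingle x hx
          · rw [mem_singleton.1 hZ]
            exact hsingle y hy
        have hc3 : ({∅, {x}, {y}} : Finset (Finset X)).card = 3 := by
          rw [card_insert_of_notMem, card_insert_of_notMem, card_singleton]
          · simp only [mem_singleton, Finset.singleton_inj]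
            exact hxy
          · simp only [mem_insert, mem_singleton]
            push_neg
            exact ⟨(singleton_ne_empty x).symm, (singleton_ne_empty y).symm⟩
        have := card_le_card hshsub
        rw [hc3, ← h.2, hcC] at this
        omega

/-! ### translation -/

def xorC (s : Finset X) (C : Finset (Finset X)) : Finset (Finset X) :=
  C.image (fun c => symmDiff s c)

lemma xor_mem {s c : Finset X} {C : Finset (Finset X)} (hc : c ∈ C) :
    symmDiff s c ∈ xorC s C := mem_image.2 ⟨c, hc, rfl⟩

lemma xor_xor (s : Finset X) (C : Finset (Finset X)) : xorC s (xorC s C) = C := by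
  rw [xorC, xorC, image_image]
  have : ((fun c => symmDiff s c) ∘ fun c => symmDiff s c) = id := by
    funext c
    simp only [Function.comp_apply, id_eq, sd_cancel]
  rw [this, image_id]

lemma shatters_xor {s Y : Finset X} {C : Finset (Finset X)}
    (h : _root_.Shatters C Y) : _root_.Shatters (xorC s C) Y := by
  rw [shatters_iff] at h ⊢
  intro p hp
  have hsub : symmDiff (s ∩ Y) p ⊆ Y := by
    intro x hx
    rcases Finset.mem_symmDiff.1 hx with ⟨h1, -⟩ | ⟨h1, -⟩
    · exact (mem_inter.1 h1).2
    · exact hp h1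
  obtain ⟨c, hc, hceq⟩ := h (symmDiff (s ∩ Y) p) hsub
  refine ⟨symmDiff s c, xor_mem hc, ?_⟩
  rw [sd_inter, hceq, sd_cancel]

lemma xor_ample {E s : Finset X} {C : Finset (Finset X)}
    (h : AmpleOn E C) (hs : s ⊆ E) : AmpleOn E (xorC s C) := by
  have hb : ∀ c ∈ xorC s C, c ⊆ E := by
    intro c hc
    obtain ⟨a, ha, rfl⟩ := mem_image.1 hc
    intro x hx
    rcases Finset.mem_symmDiff.1 hx with ⟨h1, -⟩ | ⟨h1, -⟩
    · exact hs h1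
    · exact h.1 a ha h1
  have hcard : (xorC s C).card = C.card := by
    apply card_image_of_injOn
    intro a ha b hb hab
    simp only at hab
    have : symmDiff s (symmDiff s a) = symmDiff s (symmDiff s b) := by rw [hab]
    rwa [sd_cancel, sd_cancel] at this
  have hsub1 : shE E C ⊆ shE E (xorC s C) := by
    intro Y hY
    rw [mem_shE] at hY ⊢
    exact ⟨hY.1, shatters_xor hY.2⟩
  have hsub2 : shE E (xorC s C) ⊆ shE E C := by
    intro Y hY
    rw [mem_shE] at hY ⊢
    refine ⟨hY.1, ?_⟩
    have := shatters_xor (s := s) hY.2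
    rwa [xor_xor] at this
  have : shE E (xorC s C) = shE E C := subset_antisymm hsub2 hsub1
  exact ⟨hb, by rw [hcard, this, h.2]⟩

/-! ### the geodesic lemma -/

lemma lemmaG {E : Finset X} {D : Finset (Finset X)} {t u : Finset X}
    (h : AmpleOn E D) (ht : t ∈ D) (hu : u ∈ D) (hne : t ≠ u) :
    ∃ x ∈ symmDiff t u, symmDiff t {x} ∈ D := by
  have htE : t ⊆ E := h.1 t ht
  have hD' : AmpleOn E (xorC t D) := xor_ample h htE
  have h0 : (∅ : Finset X) ∈ xorC t D := by
    have := xor_mem (s := t) ht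
    rwa [symmDiff_self, bot_eq_empty] at this
  have hA : symmDiff t u ∈ xorC t D := xor_mem hu
  have hAne : (symmDiff t u).Nonempty := by
    rw [nonempty_iff_ne_empty]
    intro hcon
    exact hne (sd_eq_empty hcon)
  have hAE : symmDiff t u ⊆ E := hD'.1 _ hA
  have hface := face_ample E.card E (xorC t D) (symmDiff t u) le_rfl hD' hAE
  obtain ⟨x, hxA, hxF⟩ := exists_singleton (symmDiff t u).card (symmDiff t u) _ le_rfl hface
    (mem_filter.2 ⟨h0, empty_subset _⟩) (mem_filter.2 ⟨hA, subset_refl _⟩) hAne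
  have hxD' : ({x} : Finset X) ∈ xorC t D := (mem_filter.1 hxF).1
  obtain ⟨d, hd, hdeq⟩ := mem_image.1 hxD'
  have : d = symmDiff t {x} := by
    rw [← hdeq, sd_cancel]
  exact ⟨x, hxA, this ▸ hd⟩

end Stmt3Aux

/-- If `C` is ample and `t ∉ C`, then the smallest cube `F[t]` containing
`t` and all concepts of `C` at Hamming distance 1 from `t` satisfies `F[t] ⊆ C ∪ {t}`. -/
theorem stmt_3 (C : Finset (Finset X)) (hC : IsAmple C) (t : Finset X) (ht : t ∉ C)
    (F : Finset (Finset X)) (hcube : IsCube F) (htF : t ∈ F)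
    (hnb : ∀ c ∈ C, hdist c t = 1 → c ∈ F)
    (hmin : ∀ B, IsCube B → t ∈ B → (∀ c ∈ C, hdist c t = 1 → c ∈ B) → F ⊆ B) :
    F ⊆ C ∪ {t} := by
  classical
  open Finset Stmt3Aux in
  intro c hcF
  rw [Finset.mem_union, Finset.mem_singleton]
  by_cases hct : c = t
  · exact Or.inr hct
  left
  -- the set of coordinates in which `t` has a neighbor in `C`
  set S : Finset X := Finset.univ.filter (fun x => symmDiff t {x} ∈ C) with hS
  have hSmem : ∀ x, x ∈ S ↔ symmDiff t {x} ∈ C := by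
    intro x
    simp [hS]
  -- `cubeAt t S` is a cube containing `t` and all neighbors of `t` in `C`
  have hcube' : IsCube (cubeAt t S) :=
    ⟨S, t \ S, Finset.sdiff_inter_self S t, rfl⟩
  have htB : t ∈ cubeAt t S := by
    rw [cubeAt]
    exact Finset.mem_image.2 ⟨t ∩ S, Finset.mem_powerset.2 Finset.inter_subset_right,
      Finset.sdiff_union_inter t S⟩
  have hdist_eq : ∀ c' : Finset X, hdist c' t = (symmDiff c' t).card := by
    intro c'
    rw [hdist, sd_eq_union]
  have hnbB : ∀ c' ∈ C, hdist c' t = 1 → c' ∈ cubeAt t S := by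
    intro c' hc' hd
    rw [hdist_eq, Finset.card_eq_one] at hd
    obtain ⟨x, hx⟩ := hd
    have hc'eq : c' = symmDiff t {x} := by
      have h1 : symmDiff c' (symmDiff c' t) = t := sd_cancel c' t
      have h2 : symmDiff t (symmDiff t c') = c' := sd_cancel t c'
      rw [symmDiff_comm t c', hx] at h2
      exact h2.symm
    have hxS : x ∈ S := (hSmem x).2 (hc'eq ▸ hc')
    rw [cubeAt]
    refine Finset.mem_image.2 ⟨c' ∩ S, Finset.mem_powerset.2 Finset.inter_subset_right, ?_⟩
    ext y
    by_cases hyx : y = x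
    · subst hyx
      simp only [Finset.mem_union, Finset.mem_sdiff, Finset.mem_inter]
      constructor
      · rintro (⟨-, hyS⟩ | ⟨hyc, -⟩)
        · exact absurd hxS hyS
        · exact hyc
      · intro hyc
        exact Or.inr ⟨hyc, hxS⟩
    · have hyt : y ∈ c' ↔ y ∈ t := by
        constructor
        · intro hy
          by_contra hyt
          have : y ∈ symmDiff c' t := Finset.mem_symmDiff.2 (Or.inl ⟨hy, hyt⟩)
          rw [hx, Finset.mem_singleton] at this
          exact hyx this
        · intro hy
          by_contra hyc
          have : y ∈ symmDiff c' t := Finset.mem_symmDiff.2 (Or.inr ⟨hy, hyc⟩)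
          rw [hx, Finset.mem_singleton] at this
          exact hyx this
      simp only [Finset.mem_union, Finset.mem_sdiff, Finset.mem_inter]
      by_cases hyS : y ∈ S
      · constructor
        · rintro (⟨-, h2⟩ | ⟨h1, -⟩)
          · exact absurd hyS h2
          · exact h1
        · intro hy
          exact Or.inr ⟨hy, hyS⟩
      · constructor
        · rintro (⟨h1, -⟩ | ⟨-, h2⟩)
          · exact hyt.2 h1
          · exact absurd h2 hyS
        · intro hy
          exact Or.inl ⟨hyt.1 hy, hyS⟩
  have hcB : c ∈ cubeAt t S := hmin _ hcube' htB hnbB hcF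
  rw [cubeAt] at hcB
  obtain ⟨s, hs, hceq⟩ := Finset.mem_image.1 hcB
  rw [Finset.mem_powerset] at hs
  -- `symmDiff c t ⊆ S`
  have hAS : symmDiff c t ⊆ S := by
    intro y hy
    rcases Finset.mem_symmDiff.1 hy with ⟨hyc, hyt⟩ | ⟨hyt, hyc⟩
    · rw [← hceq] at hyc
      rcases Finset.mem_union.1 hyc with h1 | h1
      · exact absurd (Finset.mem_sdiff.1 h1).1 hyt
      · exact hs h1
    · by_contra hyS
      apply hyc
      rw [← hceq]
      exact Finset.mem_union.2 (Or.inl (Finset.mem_sdiff.2 ⟨hyt, hyS⟩))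
  -- complement class
  have hAmp : Stmt3Aux.AmpleOn Finset.univ C := by
    refine ⟨fun c' _ => Finset.subset_univ c', ?_⟩
    rw [IsAmple] at hC
    rw [hC, shatteredSets, Stmt3Aux.shE, Finset.powerset_univ]
  have hD := Stmt3Aux.compl_ample hAmp
  by_contra hcC
  have htD : t ∈ Finset.univ.powerset \ C :=
    Finset.mem_sdiff.2 ⟨Finset.mem_powerset.2 (Finset.subset_univ t), ht⟩
  have hcD : c ∈ Finset.univ.powerset \ C :=
    Finset.mem_sdiff.2 ⟨Finset.mem_powerset.2 (Finset.subset_univ c), hcC⟩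
  obtain ⟨x, hx, hxd⟩ := Stmt3Aux.lemmaG hD htD hcD (fun hh => hct hh.symm)
  have hxS : x ∈ S := by
    apply hAS
    rwa [symmDiff_comm c t]
  have : symmDiff t {x} ∈ C := (hSmem x).1 hxS
  exact (Finset.mem_sdiff.1 hxd).2 this
end
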